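/- Assume K is algebraically closed. Then the monic degree-10 polynomial P(Y) = −20⁵ · f⁺(Y²/20, Y) has 10 distinct roots in K, and for each root y₀, exactly 5 of the other roots y satisfy ‖y − y₀‖¹⁰ = 5⁻⁷ and exactly 4 satisfy ‖y − y₀‖¹⁰ = 5⁻⁸ (valuations 7/10 and 8/10, respectively). -/

import Mathlib

open Polynomial

/-- The defining polynomial of the plane model of `X₀(125)⁺`. -/
def fplus {K : Type*} [Field K] (x y : K) : K :=
  y ^ 4 - x ^ 5 + 5 * x * y ^ 3 + 15 * x ^ 2 * y ^ 2 + 25 * x ^ 3 * y + 25 * x ^ 4 +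
    5 * y ^ 3 + 5 * x * y ^ 2 - 25 * x ^ 3 + 15 * y ^ 2 + 25 * x ^ 2 + 25 * y - 25 * x + 25

section Aux

lemma core_hi (z : ℝ) (hz : 0 < z) (p a A k K : ℕ) (hzp : z < (1/5:ℝ)^p)
    (hk : K ≤ k) (har : A + p*K ≤ a + p*k) (hst : A + p*K < a + p*k ∨ K < k) :
    (1/5:ℝ)^a * z^k < (1/5:ℝ)^A * z^K := by
  obtain ⟨d, rfl⟩ : ∃ d, k = K + d := ⟨k - K, by omega⟩
  have hzK : (0:ℝ) < z^K := pow_pos hz K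
  have h15 : (0:ℝ) < 1/5 := by norm_num
  rcases hst with h | h
  · have h1 : z^d ≤ ((1/5:ℝ)^p)^d := pow_le_pow_left₀ hz.le hzp.le d
    calc (1/5:ℝ)^a * z^(K+d) = ((1/5)^a * z^d) * z^K := by ring
      _ ≤ ((1/5)^a * ((1/5:ℝ)^p)^d) * z^K := by
          have := mul_le_mul_of_nonneg_left h1 (le_of_lt (pow_pos h15 a))
          exact mul_le_mul_of_nonneg_right this hzK.le
      _ = (1/5:ℝ)^(a+p*d) * z^K := by rw [← pow_mul, ← pow_add]
      _ < (1/5:ℝ)^A * z^K := by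
          refine mul_lt_mul_of_pos_right ?_ hzK
          exact pow_lt_pow_right_of_lt_one₀ h15 (by norm_num) (by rw [Nat.mul_add] at h; omega)
  · have h1 : z^d < ((1/5:ℝ)^p)^d := pow_lt_pow_left₀ hzp hz.le (by omega)
    calc (1/5:ℝ)^a * z^(K+d) = ((1/5)^a * z^d) * z^K := by ring
      _ < ((1/5)^a * ((1/5:ℝ)^p)^d) * z^K := by
          have := mul_lt_mul_of_pos_left h1 (pow_pos h15 a)
          exact mul_lt_mul_of_pos_right this hzK
      _ = (1/5:ℝ)^(a+p*d) * z^K := by rw [← pow_mul, ← pow_add]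
      _ ≤ (1/5:ℝ)^A * z^K := by
          refine mul_le_mul_of_nonneg_right ?_ hzK.le
          exact pow_le_pow_of_le_one h15.le (by norm_num) (by rw [Nat.mul_add] at har; omega)

lemma core_lo (z : ℝ) (hz : 0 < z) (q a A k K : ℕ) (hzq : (1/5:ℝ)^q < z)
    (hk : k ≤ K) (har : A + q*K ≤ a + q*k) (hst : A + q*K < a + q*k ∨ k < K) :
    (1/5:ℝ)^a * z^k < (1/5:ℝ)^A * z^K := by
  obtain ⟨d, rfl⟩ : ∃ d, K = k + d := ⟨K - k, by omega⟩
  have hzk : (0:ℝ) < z^k := pow_pos hz k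
  have h15 : (0:ℝ) < 1/5 := by norm_num
  rw [Nat.mul_add] at har hst
  rcases hst with h | h
  · calc (1/5:ℝ)^a * z^k < (1/5:ℝ)^(A + q*d) * z^k := by
          refine mul_lt_mul_of_pos_right ?_ hzk
          exact pow_lt_pow_right_of_lt_one₀ h15 (by norm_num) (by omega)
      _ = ((1/5:ℝ)^A * ((1/5:ℝ)^q)^d) * z^k := by rw [← pow_mul, ← pow_add]
      _ ≤ ((1/5:ℝ)^A * z^d) * z^k := by
          have h1 : ((1/5:ℝ)^q)^d ≤ z^d := pow_le_pow_left₀ (pow_pos h15 q).le hzq.le d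
          have := mul_le_mul_of_nonneg_left h1 (pow_pos h15 A).le
          exact mul_le_mul_of_nonneg_right this hzk.le
      _ = (1/5:ℝ)^A * z^(k+d) := by ring
  · calc (1/5:ℝ)^a * z^k ≤ (1/5:ℝ)^(A + q*d) * z^k := by
          refine mul_le_mul_of_nonneg_right ?_ hzk.le
          exact pow_le_pow_of_le_one h15.le (by norm_num) (by omega)
      _ = ((1/5:ℝ)^A * ((1/5:ℝ)^q)^d) * z^k := by rw [← pow_mul, ← pow_add]
      _ < ((1/5:ℝ)^A * z^d) * z^k := by
          have h1 : ((1/5:ℝ)^q)^d < z^d := pow_lt_pow_left₀ hzq (pow_pos h15 q).le (by omega)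
          have := mul_lt_mul_of_pos_left h1 (pow_pos h15 A)
          exact mul_lt_mul_of_pos_right this hzk
      _ = (1/5:ℝ)^A * z^(k+d) := by ring

lemma expand10 (x y : ℝ) (m j k : ℕ) :
    ((1/5:ℝ)^m * x^j * y^k)^10 = (1/5:ℝ)^(m*10) * (x^10)^j * (y^10)^k := by
  rw [mul_pow, mul_pow, ← pow_mul, ← pow_mul, ← pow_mul, pow_mul' x, pow_mul' y]

lemma vdom_hi (x y : ℝ) (hx : 0 < x) (hy : 0 < y) (c p m j k M J K : ℕ)
    (hxc : x ^ 10 = (1/5:ℝ) ^ c) (hyp : y ^ 10 < (1/5:ℝ) ^ p)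
    (hk : K ≤ k)
    (har : M*10 + c*J + p*K ≤ m*10 + c*j + p*k)
    (hst : M*10 + c*J + p*K < m*10 + c*j + p*k ∨ K < k) :
    (1/5:ℝ)^m * x^j * y^k < (1/5:ℝ)^M * x^J * y^K := by
  refine lt_of_pow_lt_pow_left₀ 10 (by positivity) ?_
  rw [expand10, expand10, hxc, ← pow_mul (1/5:ℝ) c j, ← pow_mul (1/5:ℝ) c J,
      ← pow_add, ← pow_add]
  exact core_hi (y^10) (by positivity) p _ _ k K hyp hk har hst

lemma vdom_lo (x y : ℝ) (hx : 0 < x) (hy : 0 < y) (c q m j k M J K : ℕ)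
    (hxc : x ^ 10 = (1/5:ℝ) ^ c) (hyq : (1/5:ℝ) ^ q < y ^ 10)
    (hk : k ≤ K)
    (har : M*10 + c*J + q*K ≤ m*10 + c*j + q*k)
    (hst : M*10 + c*J + q*K < m*10 + c*j + q*k ∨ k < K) :
    (1/5:ℝ)^m * x^j * y^k < (1/5:ℝ)^M * x^J * y^K := by
  refine lt_of_pow_lt_pow_left₀ 10 (by positivity) ?_
  rw [expand10, expand10, hxc, ← pow_mul (1/5:ℝ) c j, ← pow_mul (1/5:ℝ) c J,
      ← pow_add, ← pow_add]
  exact core_lo (y^10) (by positivity) q _ _ k K hyq hk har hst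

lemma vdom_exact (x : ℝ) (hx : 0 < x) (c m j M J : ℕ)
    (hxc : x ^ 10 = (1/5:ℝ) ^ c) (har : M*10 + c*J < m*10 + c*j) :
    (1/5:ℝ)^m * x^j < (1/5:ℝ)^M * x^J := by
  have h5 : (0:ℝ) < 1/5 := by norm_num
  have := vdom_hi x (1/5) hx h5 c 1 m j 0 M J 0 hxc (by norm_num) le_rfl
    (by omega) (by omega)
  simpa using this

lemma pow15_inj {m n : ℕ} (h : (1/5:ℝ)^m = (1/5:ℝ)^n) : m = n := by
  rcases lt_trichotomy m n with hc | hc | hc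
  · have := pow_lt_pow_right_of_lt_one₀ (by norm_num : (0:ℝ) < 1/5) (by norm_num) hc
    linarith
  · exact hc
  · have := pow_lt_pow_right_of_lt_one₀ (by norm_num : (0:ℝ) < 1/5) (by norm_num) hc
    linarith

lemma pow10_inj {a b : ℝ} (ha : 0 ≤ a) (hb : 0 ≤ b) (h : a^10 = b^10) : a = b := by
  rcases lt_trichotomy a b with hc | hc | hc
  · have := pow_lt_pow_left₀ hc ha (n := 10) (by norm_num); linarith
  · exact hc
  · have := pow_lt_pow_left₀ hc hb (n := 10) (by norm_num); linarith

variable {K : Type*} [Field K]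

lemma vadd_eq (v : AbsoluteValue K ℝ) (hna : IsNonarchimedean v) {a b : K}
    (h : v b < v a) : v (a + b) = v a := by
  refine le_antisymm ((hna a b).trans (by simp [h.le])) ?_
  have h2 := hna (a + b) (-b)
  simp only [add_neg_cancel_right, v.map_neg] at h2
  rcases le_or_gt (v a) (v (a+b)) with h3 | h3
  · exact h3
  · have := max_lt h3 h; linarith

lemma vadd_lt (v : AbsoluteValue K ℝ) (hna : IsNonarchimedean v) {a b : K} {c : ℝ}
    (h1 : v a < c) (h2 : v b < c) : v (a + b) < c :=
  (hna a b).trans_lt (max_lt h1 h2)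

instance : Fact (Nat.Prime 5) := ⟨by norm_num⟩

lemma padic_pow (m : ℕ) : padicNorm 5 ((5:ℚ)^m) = ((5:ℚ)⁻¹)^m := by
  induction m with
  | zero => simp
  | succ n ih =>
    have h5 : ((5:ℕ):ℚ) = (5:ℚ) := by norm_num
    rw [pow_succ, pow_succ, padicNorm.mul, ih, ← h5, padicNorm.padicNorm_p_of_prime, h5]

lemma vnum (v : AbsoluteValue K ℝ) (hQ : ∀ q : ℚ, v (q : K) = (padicNorm 5 q : ℝ))
    (m : ℕ) (u : ℤ) (hu : ¬ (5:ℤ) ∣ u) (q : ℚ) (hq : q = 5^m * u) :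
    v ((q : K)) = (1/5:ℝ)^m := by
  rw [hQ, hq, padicNorm.mul, padic_pow, (padicNorm.int_eq_one_iff u).mpr hu]
  push_cast
  norm_num

noncomputable def pl (K : Type*) [Field K] : Polynomial K :=
  X^10 - C 500 * X^8 - C 10000 * X^7 - C 110000 * X^6 - C 800000 * X^5 - C 4200000 * X^4
    - C 16000000 * X^3 - C 44000000 * X^2 - C 80000000 * X - C 80000000

lemma pl_natDegree : (pl K).natDegree = 10 := by
  unfold pl; compute_degree!

lemma pl_monic : (pl K).Monic := by
  have h : (pl K).coeff 10 = 1 := by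
    unfold pl
    simp [coeff_X_pow, coeff_C_mul]
  have h2 : (pl K).leadingCoeff = 1 := by
    rw [leadingCoeff, pl_natDegree, h]
  exact h2

lemma pl_eval (y : K) : (pl K).eval y =
    y^10 - 500*y^8 - 10000*y^7 - 110000*y^6 - 800000*y^5 - 4200000*y^4
      - 16000000*y^3 - 44000000*y^2 - 80000000*y - 80000000 := by
  simp [pl]

lemma pl_deriv_eval (y : K) : (pl K).derivative.eval y =
    10*y^9 - 4000*y^7 - 70000*y^6 - 660000*y^5 - 4000000*y^4 - 16800000*y^3
      - 48000000*y^2 - 88000000*y - 80000000 := by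
  simp [pl]
  ring

lemma pl_fplus [CharZero K] (y : K) :
    -(20 : K) ^ 5 * fplus (y ^ 2 / 20) y = (pl K).eval y := by
  rw [pl_eval, fplus]
  field_simp
  ring

lemma vc1 (v : AbsoluteValue K ℝ) (hQ : ∀ q : ℚ, v (q : K) = (padicNorm 5 q : ℝ)) :
    v ((1 : K)) = (1/5:ℝ)^0 := by
  have h := vnum v hQ 0 1 (by omega) 1 (by norm_num)
  rwa [show ((1:ℚ):K) = (1:K) by norm_num] at h

lemma vc10 (v : AbsoluteValue K ℝ) (hQ : ∀ q : ℚ, v (q : K) = (padicNorm 5 q : ℝ)) :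
    v ((10 : K)) = (1/5:ℝ)^1 := by
  have h := vnum v hQ 1 2 (by omega) 10 (by norm_num)
  rwa [show ((10:ℚ):K) = (10:K) by norm_num] at h

lemma vc45 (v : AbsoluteValue K ℝ) (hQ : ∀ q : ℚ, v (q : K) = (padicNorm 5 q : ℝ)) :
    v ((45 : K)) = (1/5:ℝ)^1 := by
  have h := vnum v hQ 1 9 (by omega) 45 (by norm_num)
  rwa [show ((45:ℚ):K) = (45:K) by norm_num] at h

lemma vc120 (v : AbsoluteValue K ℝ) (hQ : ∀ q : ℚ, v (q : K) = (padicNorm 5 q : ℝ)) :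
    v ((120 : K)) = (1/5:ℝ)^1 := by
  have h := vnum v hQ 1 24 (by omega) 120 (by norm_num)
  rwa [show ((120:ℚ):K) = (120:K) by norm_num] at h

lemma vc210 (v : AbsoluteValue K ℝ) (hQ : ∀ q : ℚ, v (q : K) = (padicNorm 5 q : ℝ)) :
    v ((210 : K)) = (1/5:ℝ)^1 := by
  have h := vnum v hQ 1 42 (by omega) 210 (by norm_num)
  rwa [show ((210:ℚ):K) = (210:K) by norm_num] at h

lemma vc252 (v : AbsoluteValue K ℝ) (hQ : ∀ q : ℚ, v (q : K) = (padicNorm 5 q : ℝ)) :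
    v ((252 : K)) = (1/5:ℝ)^0 := by
  have h := vnum v hQ 0 252 (by omega) 252 (by norm_num)
  rwa [show ((252:ℚ):K) = (252:K) by norm_num] at h

lemma vc500 (v : AbsoluteValue K ℝ) (hQ : ∀ q : ℚ, v (q : K) = (padicNorm 5 q : ℝ)) :
    v ((500 : K)) = (1/5:ℝ)^3 := by
  have h := vnum v hQ 3 4 (by omega) 500 (by norm_num)
  rwa [show ((500:ℚ):K) = (500:K) by norm_num] at h

lemma vc4000 (v : AbsoluteValue K ℝ) (hQ : ∀ q : ℚ, v (q : K) = (padicNorm 5 q : ℝ)) :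
    v ((4000 : K)) = (1/5:ℝ)^3 := by
  have h := vnum v hQ 3 32 (by omega) 4000 (by norm_num)
  rwa [show ((4000:ℚ):K) = (4000:K) by norm_num] at h

lemma vc10000 (v : AbsoluteValue K ℝ) (hQ : ∀ q : ℚ, v (q : K) = (padicNorm 5 q : ℝ)) :
    v ((10000 : K)) = (1/5:ℝ)^4 := by
  have h := vnum v hQ 4 16 (by omega) 10000 (by norm_num)
  rwa [show ((10000:ℚ):K) = (10000:K) by norm_num] at h

lemma vc14000 (v : AbsoluteValue K ℝ) (hQ : ∀ q : ℚ, v (q : K) = (padicNorm 5 q : ℝ)) :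
    v ((14000 : K)) = (1/5:ℝ)^3 := by
  have h := vnum v hQ 3 112 (by omega) 14000 (by norm_num)
  rwa [show ((14000:ℚ):K) = (14000:K) by norm_num] at h

lemma vc28000 (v : AbsoluteValue K ℝ) (hQ : ∀ q : ℚ, v (q : K) = (padicNorm 5 q : ℝ)) :
    v ((28000 : K)) = (1/5:ℝ)^3 := by
  have h := vnum v hQ 3 224 (by omega) 28000 (by norm_num)
  rwa [show ((28000:ℚ):K) = (28000:K) by norm_num] at h

lemma vc35000 (v : AbsoluteValue K ℝ) (hQ : ∀ q : ℚ, v (q : K) = (padicNorm 5 q : ℝ)) :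
    v ((35000 : K)) = (1/5:ℝ)^4 := by
  have h := vnum v hQ 4 56 (by omega) 35000 (by norm_num)
  rwa [show ((35000:ℚ):K) = (35000:K) by norm_num] at h

lemma vc70000 (v : AbsoluteValue K ℝ) (hQ : ∀ q : ℚ, v (q : K) = (padicNorm 5 q : ℝ)) :
    v ((70000 : K)) = (1/5:ℝ)^4 := by
  have h := vnum v hQ 4 112 (by omega) 70000 (by norm_num)
  rwa [show ((70000:ℚ):K) = (70000:K) by norm_num] at h

lemma vc110000 (v : AbsoluteValue K ℝ) (hQ : ∀ q : ℚ, v (q : K) = (padicNorm 5 q : ℝ)) :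
    v ((110000 : K)) = (1/5:ℝ)^4 := by
  have h := vnum v hQ 4 176 (by omega) 110000 (by norm_num)
  rwa [show ((110000:ℚ):K) = (110000:K) by norm_num] at h

lemma vc210000 (v : AbsoluteValue K ℝ) (hQ : ∀ q : ℚ, v (q : K) = (padicNorm 5 q : ℝ)) :
    v ((210000 : K)) = (1/5:ℝ)^4 := by
  have h := vnum v hQ 4 336 (by omega) 210000 (by norm_num)
  rwa [show ((210000:ℚ):K) = (210000:K) by norm_num] at h

lemma vc350000 (v : AbsoluteValue K ℝ) (hQ : ∀ q : ℚ, v (q : K) = (padicNorm 5 q : ℝ)) :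
    v ((350000 : K)) = (1/5:ℝ)^5 := by
  have h := vnum v hQ 5 112 (by omega) 350000 (by norm_num)
  rwa [show ((350000:ℚ):K) = (350000:K) by norm_num] at h

lemma vc660000 (v : AbsoluteValue K ℝ) (hQ : ∀ q : ℚ, v (q : K) = (padicNorm 5 q : ℝ)) :
    v ((660000 : K)) = (1/5:ℝ)^4 := by
  have h := vnum v hQ 4 1056 (by omega) 660000 (by norm_num)
  rwa [show ((660000:ℚ):K) = (660000:K) by norm_num] at h

lemma vc800000 (v : AbsoluteValue K ℝ) (hQ : ∀ q : ℚ, v (q : K) = (padicNorm 5 q : ℝ)) :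
    v ((800000 : K)) = (1/5:ℝ)^5 := by
  have h := vnum v hQ 5 256 (by omega) 800000 (by norm_num)
  rwa [show ((800000:ℚ):K) = (800000:K) by norm_num] at h

lemma vc1650000 (v : AbsoluteValue K ℝ) (hQ : ∀ q : ℚ, v (q : K) = (padicNorm 5 q : ℝ)) :
    v ((1650000 : K)) = (1/5:ℝ)^5 := by
  have h := vnum v hQ 5 528 (by omega) 1650000 (by norm_num)
  rwa [show ((1650000:ℚ):K) = (1650000:K) by norm_num] at h

lemma vc2200000 (v : AbsoluteValue K ℝ) (hQ : ∀ q : ℚ, v (q : K) = (padicNorm 5 q : ℝ)) :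
    v ((2200000 : K)) = (1/5:ℝ)^5 := by
  have h := vnum v hQ 5 704 (by omega) 2200000 (by norm_num)
  rwa [show ((2200000:ℚ):K) = (2200000:K) by norm_num] at h

lemma vc4000000 (v : AbsoluteValue K ℝ) (hQ : ∀ q : ℚ, v (q : K) = (padicNorm 5 q : ℝ)) :
    v ((4000000 : K)) = (1/5:ℝ)^6 := by
  have h := vnum v hQ 6 256 (by omega) 4000000 (by norm_num)
  rwa [show ((4000000:ℚ):K) = (4000000:K) by norm_num] at h

lemma vc4200000 (v : AbsoluteValue K ℝ) (hQ : ∀ q : ℚ, v (q : K) = (padicNorm 5 q : ℝ)) :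
    v ((4200000 : K)) = (1/5:ℝ)^5 := by
  have h := vnum v hQ 5 1344 (by omega) 4200000 (by norm_num)
  rwa [show ((4200000:ℚ):K) = (4200000:K) by norm_num] at h

lemma vc8000000 (v : AbsoluteValue K ℝ) (hQ : ∀ q : ℚ, v (q : K) = (padicNorm 5 q : ℝ)) :
    v ((8000000 : K)) = (1/5:ℝ)^6 := by
  have h := vnum v hQ 6 512 (by omega) 8000000 (by norm_num)
  rwa [show ((8000000:ℚ):K) = (8000000:K) by norm_num] at h

lemma vc16000000 (v : AbsoluteValue K ℝ) (hQ : ∀ q : ℚ, v (q : K) = (padicNorm 5 q : ℝ)) :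
    v ((16000000 : K)) = (1/5:ℝ)^6 := by
  have h := vnum v hQ 6 1024 (by omega) 16000000 (by norm_num)
  rwa [show ((16000000:ℚ):K) = (16000000:K) by norm_num] at h

lemma vc16800000 (v : AbsoluteValue K ℝ) (hQ : ∀ q : ℚ, v (q : K) = (padicNorm 5 q : ℝ)) :
    v ((16800000 : K)) = (1/5:ℝ)^5 := by
  have h := vnum v hQ 5 5376 (by omega) 16800000 (by norm_num)
  rwa [show ((16800000:ℚ):K) = (16800000:K) by norm_num] at h

lemma vc25200000 (v : AbsoluteValue K ℝ) (hQ : ∀ q : ℚ, v (q : K) = (padicNorm 5 q : ℝ)) :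
    v ((25200000 : K)) = (1/5:ℝ)^5 := by
  have h := vnum v hQ 5 8064 (by omega) 25200000 (by norm_num)
  rwa [show ((25200000:ℚ):K) = (25200000:K) by norm_num] at h

lemma vc44000000 (v : AbsoluteValue K ℝ) (hQ : ∀ q : ℚ, v (q : K) = (padicNorm 5 q : ℝ)) :
    v ((44000000 : K)) = (1/5:ℝ)^6 := by
  have h := vnum v hQ 6 2816 (by omega) 44000000 (by norm_num)
  rwa [show ((44000000:ℚ):K) = (44000000:K) by norm_num] at h

lemma vc48000000 (v : AbsoluteValue K ℝ) (hQ : ∀ q : ℚ, v (q : K) = (padicNorm 5 q : ℝ)) :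
    v ((48000000 : K)) = (1/5:ℝ)^6 := by
  have h := vnum v hQ 6 3072 (by omega) 48000000 (by norm_num)
  rwa [show ((48000000:ℚ):K) = (48000000:K) by norm_num] at h

lemma vc80000000 (v : AbsoluteValue K ℝ) (hQ : ∀ q : ℚ, v (q : K) = (padicNorm 5 q : ℝ)) :
    v ((80000000 : K)) = (1/5:ℝ)^7 := by
  have h := vnum v hQ 7 1024 (by omega) 80000000 (by norm_num)
  rwa [show ((80000000:ℚ):K) = (80000000:K) by norm_num] at h

lemma vc88000000 (v : AbsoluteValue K ℝ) (hQ : ∀ q : ℚ, v (q : K) = (padicNorm 5 q : ℝ)) :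
    v ((88000000 : K)) = (1/5:ℝ)^6 := by
  have h := vnum v hQ 6 5632 (by omega) 88000000 (by norm_num)
  rwa [show ((88000000:ℚ):K) = (88000000:K) by norm_num] at h

lemma vroot (v : AbsoluteValue K ℝ) (hna : IsNonarchimedean v)
    (hQ : ∀ q : ℚ, v (q : K) = (padicNorm 5 q : ℝ)) (y₀ : K) (h : (pl K).eval y₀ = 0) :
    0 < v y₀ ∧ (v y₀) ^ 10 = (1/5:ℝ) ^ 7 := by
  have heval : y₀^10 - 500*y₀^8 - 10000*y₀^7 - 110000*y₀^6 - 800000*y₀^5 - 4200000*y₀^4 - 16000000*y₀^3 - 44000000*y₀^2 - 80000000*y₀ - 80000000 = 0 := by rw [← pl_eval]; exact h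
  have nc500 : v ((-500 : K)) = (1/5:ℝ)^3 := by
    rw [show ((-500:K)) = -((500:K)) by norm_num, v.map_neg]
    exact vc500 v hQ
  have nc10000 : v ((-10000 : K)) = (1/5:ℝ)^4 := by
    rw [show ((-10000:K)) = -((10000:K)) by norm_num, v.map_neg]
    exact vc10000 v hQ
  have nc110000 : v ((-110000 : K)) = (1/5:ℝ)^4 := by
    rw [show ((-110000:K)) = -((110000:K)) by norm_num, v.map_neg]
    exact vc110000 v hQ
  have nc800000 : v ((-800000 : K)) = (1/5:ℝ)^5 := by
    rw [show ((-800000:K)) = -((800000:K)) by norm_num, v.map_neg]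
    exact vc800000 v hQ
  have nc4200000 : v ((-4200000 : K)) = (1/5:ℝ)^5 := by
    rw [show ((-4200000:K)) = -((4200000:K)) by norm_num, v.map_neg]
    exact vc4200000 v hQ
  have nc16000000 : v ((-16000000 : K)) = (1/5:ℝ)^6 := by
    rw [show ((-16000000:K)) = -((16000000:K)) by norm_num, v.map_neg]
    exact vc16000000 v hQ
  have nc44000000 : v ((-44000000 : K)) = (1/5:ℝ)^6 := by
    rw [show ((-44000000:K)) = -((44000000:K)) by norm_num, v.map_neg]
    exact vc44000000 v hQ
  have nc80000000 : v ((-80000000 : K)) = (1/5:ℝ)^7 := by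
    rw [show ((-80000000:K)) = -((80000000:K)) by norm_num, v.map_neg]
    exact vc80000000 v hQ
  have hy0 : y₀ ≠ 0 := by
    intro h0
    rw [h0] at heval
    have h80 : ((-80000000) : K) = 0 := by linear_combination heval
    rw [h80, v.map_zero] at nc80000000
    norm_num at nc80000000
  have ht : 0 < v y₀ := v.pos hy0
  refine ⟨ht, ?_⟩
  by_contra hne
  rcases lt_or_gt_of_ne hne with hlt | hgt
  · have hs1 : (-80000000 : K) * y₀ ^ 0 + (y₀ ^ 10 + ((-80000000 : K) * y₀ ^ 1 + ((-44000000 : K) * y₀ ^ 2 + ((-16000000 : K) * y₀ ^ 3 + ((-4200000 : K) * y₀ ^ 4 + ((-800000 : K) * y₀ ^ 5 + ((-110000 : K) * y₀ ^ 6 + ((-10000 : K) * y₀ ^ 7 + ((-500 : K) * y₀ ^ 8))))))))) = 0 := by linear_combination heval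
    have hvdom : v ((-80000000 : K) * y₀ ^ 0) = (1/5:ℝ)^7 * (v y₀)^0 := by
      rw [v.map_mul, v.map_pow, nc80000000]
    have hb0 : v (y₀ ^ 10) < (1/5:ℝ)^7 * (v y₀)^0 := by
      rw [v.map_pow, pow_zero, mul_one]; exact hlt
    have hb1 : v ((-80000000 : K) * y₀ ^ 1) < (1/5:ℝ)^7 * (v y₀)^0 := by
      rw [v.map_mul, v.map_pow, nc80000000]
      simpa using vdom_hi 1 (v y₀) one_pos ht 0 7 7 0 1 7 0 0 (by norm_num) hlt (by norm_num) (by norm_num) (Or.inl (by norm_num))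
    have hb2 : v ((-44000000 : K) * y₀ ^ 2) < (1/5:ℝ)^7 * (v y₀)^0 := by
      rw [v.map_mul, v.map_pow, nc44000000]
      simpa using vdom_hi 1 (v y₀) one_pos ht 0 7 6 0 2 7 0 0 (by norm_num) hlt (by norm_num) (by norm_num) (Or.inl (by norm_num))
    have hb3 : v ((-16000000 : K) * y₀ ^ 3) < (1/5:ℝ)^7 * (v y₀)^0 := by
      rw [v.map_mul, v.map_pow, nc16000000]
      simpa using vdom_hi 1 (v y₀) one_pos ht 0 7 6 0 3 7 0 0 (by norm_num) hlt (by norm_num) (by norm_num) (Or.inl (by norm_num))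
    have hb4 : v ((-4200000 : K) * y₀ ^ 4) < (1/5:ℝ)^7 * (v y₀)^0 := by
      rw [v.map_mul, v.map_pow, nc4200000]
      simpa using vdom_hi 1 (v y₀) one_pos ht 0 7 5 0 4 7 0 0 (by norm_num) hlt (by norm_num) (by norm_num) (Or.inl (by norm_num))
    have hb5 : v ((-800000 : K) * y₀ ^ 5) < (1/5:ℝ)^7 * (v y₀)^0 := by
      rw [v.map_mul, v.map_pow, nc800000]
      simpa using vdom_hi 1 (v y₀) one_pos ht 0 7 5 0 5 7 0 0 (by norm_num) hlt (by norm_num) (by norm_num) (Or.inl (by norm_num))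
    have hb6 : v ((-110000 : K) * y₀ ^ 6) < (1/5:ℝ)^7 * (v y₀)^0 := by
      rw [v.map_mul, v.map_pow, nc110000]
      simpa using vdom_hi 1 (v y₀) one_pos ht 0 7 4 0 6 7 0 0 (by norm_num) hlt (by norm_num) (by norm_num) (Or.inl (by norm_num))
    have hb7 : v ((-10000 : K) * y₀ ^ 7) < (1/5:ℝ)^7 * (v y₀)^0 := by
      rw [v.map_mul, v.map_pow, nc10000]
      simpa using vdom_hi 1 (v y₀) one_pos ht 0 7 4 0 7 7 0 0 (by norm_num) hlt (by norm_num) (by norm_num) (Or.inl (by norm_num))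
    have hb8 : v ((-500 : K) * y₀ ^ 8) < (1/5:ℝ)^7 * (v y₀)^0 := by
      rw [v.map_mul, v.map_pow, nc500]
      simpa using vdom_hi 1 (v y₀) one_pos ht 0 7 3 0 8 7 0 0 (by norm_num) hlt (by norm_num) (by norm_num) (Or.inl (by norm_num))
    have hrest : v (y₀ ^ 10 + ((-80000000 : K) * y₀ ^ 1 + ((-44000000 : K) * y₀ ^ 2 + ((-16000000 : K) * y₀ ^ 3 + ((-4200000 : K) * y₀ ^ 4 + ((-800000 : K) * y₀ ^ 5 + ((-110000 : K) * y₀ ^ 6 + ((-10000 : K) * y₀ ^ 7 + ((-500 : K) * y₀ ^ 8))))))))) < v ((-80000000 : K) * y₀ ^ 0) := by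
      rw [hvdom]
      exact vadd_lt v hna hb0 (vadd_lt v hna hb1 (vadd_lt v hna hb2 (vadd_lt v hna hb3 (vadd_lt v hna hb4 (vadd_lt v hna hb5 (vadd_lt v hna hb6 (vadd_lt v hna hb7 (hb8))))))))
    have hfin := vadd_eq v hna hrest
    rw [hs1, v.map_zero] at hfin
    rw [hvdom] at hfin
    have hpos : 0 < (1/5:ℝ)^7 * (v y₀)^0 := by positivity
    linarith
  · have hs2 : y₀ ^ 10 + ((-80000000 : K) * y₀ ^ 0 + ((-80000000 : K) * y₀ ^ 1 + ((-44000000 : K) * y₀ ^ 2 + ((-16000000 : K) * y₀ ^ 3 + ((-4200000 : K) * y₀ ^ 4 + ((-800000 : K) * y₀ ^ 5 + ((-110000 : K) * y₀ ^ 6 + ((-10000 : K) * y₀ ^ 7 + ((-500 : K) * y₀ ^ 8))))))))) = 0 := by linear_combination heval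
    have hg1 : v ((-80000000 : K) * y₀ ^ 0) < v (y₀ ^ 10) := by
      rw [v.map_pow, v.map_mul, v.map_pow, nc80000000]
      simpa using vdom_lo 1 (v y₀) one_pos ht 0 7 7 0 0 0 0 10 (by norm_num) hgt (by norm_num) (by norm_num) (Or.inr (by norm_num))
    have hg2 : v ((-80000000 : K) * y₀ ^ 1) < v (y₀ ^ 10) := by
      rw [v.map_pow, v.map_mul, v.map_pow, nc80000000]
      simpa using vdom_lo 1 (v y₀) one_pos ht 0 7 7 0 1 0 0 10 (by norm_num) hgt (by norm_num) (by norm_num) (Or.inl (by norm_num))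
    have hg3 : v ((-44000000 : K) * y₀ ^ 2) < v (y₀ ^ 10) := by
      rw [v.map_pow, v.map_mul, v.map_pow, nc44000000]
      simpa using vdom_lo 1 (v y₀) one_pos ht 0 7 6 0 2 0 0 10 (by norm_num) hgt (by norm_num) (by norm_num) (Or.inl (by norm_num))
    have hg4 : v ((-16000000 : K) * y₀ ^ 3) < v (y₀ ^ 10) := by
      rw [v.map_pow, v.map_mul, v.map_pow, nc16000000]
      simpa using vdom_lo 1 (v y₀) one_pos ht 0 7 6 0 3 0 0 10 (by norm_num) hgt (by norm_num) (by norm_num) (Or.inl (by norm_num))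
    have hg5 : v ((-4200000 : K) * y₀ ^ 4) < v (y₀ ^ 10) := by
      rw [v.map_pow, v.map_mul, v.map_pow, nc4200000]
      simpa using vdom_lo 1 (v y₀) one_pos ht 0 7 5 0 4 0 0 10 (by norm_num) hgt (by norm_num) (by norm_num) (Or.inl (by norm_num))
    have hg6 : v ((-800000 : K) * y₀ ^ 5) < v (y₀ ^ 10) := by
      rw [v.map_pow, v.map_mul, v.map_pow, nc800000]
      simpa using vdom_lo 1 (v y₀) one_pos ht 0 7 5 0 5 0 0 10 (by norm_num) hgt (by norm_num) (by norm_num) (Or.inl (by norm_num))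
    have hg7 : v ((-110000 : K) * y₀ ^ 6) < v (y₀ ^ 10) := by
      rw [v.map_pow, v.map_mul, v.map_pow, nc110000]
      simpa using vdom_lo 1 (v y₀) one_pos ht 0 7 4 0 6 0 0 10 (by norm_num) hgt (by norm_num) (by norm_num) (Or.inl (by norm_num))
    have hg8 : v ((-10000 : K) * y₀ ^ 7) < v (y₀ ^ 10) := by
      rw [v.map_pow, v.map_mul, v.map_pow, nc10000]
      simpa using vdom_lo 1 (v y₀) one_pos ht 0 7 4 0 7 0 0 10 (by norm_num) hgt (by norm_num) (by norm_num) (Or.inl (by norm_num))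
    have hg9 : v ((-500 : K) * y₀ ^ 8) < v (y₀ ^ 10) := by
      rw [v.map_pow, v.map_mul, v.map_pow, nc500]
      simpa using vdom_lo 1 (v y₀) one_pos ht 0 7 3 0 8 0 0 10 (by norm_num) hgt (by norm_num) (by norm_num) (Or.inl (by norm_num))
    have hrest : v ((-80000000 : K) * y₀ ^ 0 + ((-80000000 : K) * y₀ ^ 1 + ((-44000000 : K) * y₀ ^ 2 + ((-16000000 : K) * y₀ ^ 3 + ((-4200000 : K) * y₀ ^ 4 + ((-800000 : K) * y₀ ^ 5 + ((-110000 : K) * y₀ ^ 6 + ((-10000 : K) * y₀ ^ 7 + ((-500 : K) * y₀ ^ 8))))))))) < v (y₀ ^ 10) :=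
      vadd_lt v hna hg1 (vadd_lt v hna hg2 (vadd_lt v hna hg3 (vadd_lt v hna hg4 (vadd_lt v hna hg5 (vadd_lt v hna hg6 (vadd_lt v hna hg7 (vadd_lt v hna hg8 (hg9))))))))
    have hfin := vadd_eq v hna hrest
    rw [hs2, v.map_zero] at hfin
    rw [v.map_pow] at hfin
    rw [← hfin] at hgt
    norm_num at hgt

lemma vg1 (v : AbsoluteValue K ℝ) (hna : IsNonarchimedean v)
    (hQ : ∀ q : ℚ, v (q : K) = (padicNorm 5 q : ℝ)) (y₀ : K) (h : (pl K).eval y₀ = 0) :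
    v ((pl K).derivative.eval y₀) = (1/5:ℝ)^6 * v y₀ := by
  obtain ⟨ht, ht7⟩ := vroot v hna hQ y₀ h
  have nc10 : v ((-10 : K)) = (1/5:ℝ)^1 := by
    rw [show ((-10:K)) = -((10:K)) by norm_num, v.map_neg]
    exact vc10 v hQ
  have nc4000 : v ((-4000 : K)) = (1/5:ℝ)^3 := by
    rw [show ((-4000:K)) = -((4000:K)) by norm_num, v.map_neg]
    exact vc4000 v hQ
  have nc70000 : v ((-70000 : K)) = (1/5:ℝ)^4 := by
    rw [show ((-70000:K)) = -((70000:K)) by norm_num, v.map_neg]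
    exact vc70000 v hQ
  have nc660000 : v ((-660000 : K)) = (1/5:ℝ)^4 := by
    rw [show ((-660000:K)) = -((660000:K)) by norm_num, v.map_neg]
    exact vc660000 v hQ
  have nc4000000 : v ((-4000000 : K)) = (1/5:ℝ)^6 := by
    rw [show ((-4000000:K)) = -((4000000:K)) by norm_num, v.map_neg]
    exact vc4000000 v hQ
  have nc16800000 : v ((-16800000 : K)) = (1/5:ℝ)^5 := by
    rw [show ((-16800000:K)) = -((16800000:K)) by norm_num, v.map_neg]
    exact vc16800000 v hQ
  have nc48000000 : v ((-48000000 : K)) = (1/5:ℝ)^6 := by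
    rw [show ((-48000000:K)) = -((48000000:K)) by norm_num, v.map_neg]
    exact vc48000000 v hQ
  have nc80000000 : v ((-80000000 : K)) = (1/5:ℝ)^7 := by
    rw [show ((-80000000:K)) = -((80000000:K)) by norm_num, v.map_neg]
    exact vc80000000 v hQ
  have nc88000000 : v ((-88000000 : K)) = (1/5:ℝ)^6 := by
    rw [show ((-88000000:K)) = -((88000000:K)) by norm_num, v.map_neg]
    exact vc88000000 v hQ
  have hD : 10*y₀^9 - 4000*y₀^7 - 70000*y₀^6 - 660000*y₀^5 - 4000000*y₀^4 - 16800000*y₀^3 - 48000000*y₀^2 - 88000000*y₀ - 80000000 = (-88000000 : K) * y₀ ^ 1 + ((-80000000 : K) * y₀ ^ 0 + ((-48000000 : K) * y₀ ^ 2 + ((-16800000 : K) * y₀ ^ 3 + ((-4000000 : K) * y₀ ^ 4 + ((-660000 : K) * y₀ ^ 5 + ((-70000 : K) * y₀ ^ 6 + ((-4000 : K) * y₀ ^ 7 + ((10 : K) * y₀ ^ 9)))))))) := by ring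
  have hvdom : v ((-88000000 : K) * y₀ ^ 1) = (1/5:ℝ)^6 * (v y₀)^1 := by
    rw [v.map_mul, v.map_pow, nc88000000]
  have hd1 : v ((-80000000 : K) * y₀ ^ 0) < (1/5:ℝ)^6 * (v y₀)^1 := by
    rw [v.map_mul, v.map_pow, nc80000000]
    exact vdom_exact (v y₀) ht 7 7 0 6 1 ht7 (by norm_num)
  have hd2 : v ((-48000000 : K) * y₀ ^ 2) < (1/5:ℝ)^6 * (v y₀)^1 := by
    rw [v.map_mul, v.map_pow, nc48000000]
    exact vdom_exact (v y₀) ht 7 6 2 6 1 ht7 (by norm_num)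
  have hd3 : v ((-16800000 : K) * y₀ ^ 3) < (1/5:ℝ)^6 * (v y₀)^1 := by
    rw [v.map_mul, v.map_pow, nc16800000]
    exact vdom_exact (v y₀) ht 7 5 3 6 1 ht7 (by norm_num)
  have hd4 : v ((-4000000 : K) * y₀ ^ 4) < (1/5:ℝ)^6 * (v y₀)^1 := by
    rw [v.map_mul, v.map_pow, nc4000000]
    exact vdom_exact (v y₀) ht 7 6 4 6 1 ht7 (by norm_num)
  have hd5 : v ((-660000 : K) * y₀ ^ 5) < (1/5:ℝ)^6 * (v y₀)^1 := by
    rw [v.map_mul, v.map_pow, nc660000]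
    exact vdom_exact (v y₀) ht 7 4 5 6 1 ht7 (by norm_num)
  have hd6 : v ((-70000 : K) * y₀ ^ 6) < (1/5:ℝ)^6 * (v y₀)^1 := by
    rw [v.map_mul, v.map_pow, nc70000]
    exact vdom_exact (v y₀) ht 7 4 6 6 1 ht7 (by norm_num)
  have hd7 : v ((-4000 : K) * y₀ ^ 7) < (1/5:ℝ)^6 * (v y₀)^1 := by
    rw [v.map_mul, v.map_pow, nc4000]
    exact vdom_exact (v y₀) ht 7 3 7 6 1 ht7 (by norm_num)
  have pc10 : v ((10 : K)) = (1/5:ℝ)^1 := vc10 v hQ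
  have hd8 : v ((10 : K) * y₀ ^ 9) < (1/5:ℝ)^6 * (v y₀)^1 := by
    rw [v.map_mul, v.map_pow, pc10]
    exact vdom_exact (v y₀) ht 7 1 9 6 1 ht7 (by norm_num)
  have hrest : v ((-80000000 : K) * y₀ ^ 0 + ((-48000000 : K) * y₀ ^ 2 + ((-16800000 : K) * y₀ ^ 3 + ((-4000000 : K) * y₀ ^ 4 + ((-660000 : K) * y₀ ^ 5 + ((-70000 : K) * y₀ ^ 6 + ((-4000 : K) * y₀ ^ 7 + ((10 : K) * y₀ ^ 9)))))))) < v ((-88000000 : K) * y₀ ^ 1) := by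
    rw [hvdom]
    exact vadd_lt v hna hd1 (vadd_lt v hna hd2 (vadd_lt v hna hd3 (vadd_lt v hna hd4 (vadd_lt v hna hd5 (vadd_lt v hna hd6 (vadd_lt v hna hd7 (hd8)))))))
  rw [pl_deriv_eval, hD, vadd_eq v hna hrest, hvdom, pow_one]

set_option maxHeartbeats 2000000 in
lemma vdist (v : AbsoluteValue K ℝ) (hna : IsNonarchimedean v)
    (hQ : ∀ q : ℚ, v (q : K) = (padicNorm 5 q : ℝ)) (y₀ y : K)
    (h₀ : (pl K).eval y₀ = 0) (h : (pl K).eval y = 0) (hne : y ≠ y₀) :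
    (v (y - y₀)) ^ 10 = (1/5:ℝ) ^ 7 ∨ (v (y - y₀)) ^ 10 = (1/5:ℝ) ^ 8 := by
  obtain ⟨ht, ht7⟩ := vroot v hna hQ y₀ h₀
  obtain ⟨hty, hty7⟩ := vroot v hna hQ y h
  set z := y - y₀ with hzdef
  have hz : z ≠ 0 := sub_ne_zero.mpr hne
  have hs : 0 < v z := v.pos hz
  have hvy : v y = v y₀ := pow10_inj (v.nonneg y) (v.nonneg y₀) (hty7.trans ht7.symm)
  have hsle : v z ≤ v y₀ := by
    have h1 := hna y (-y₀)
    rw [← sub_eq_add_neg, v.map_neg, hvy, max_self] at h1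
    exact h1
  have hs7 : (v z)^10 ≤ (1/5:ℝ)^7 := by
    rw [← ht7]; exact pow_le_pow_left₀ (v.nonneg _) hsle 10
  have hyz : y = y₀ + z := by rw [hzdef]; ring
  have heval₀ : y₀^10 - 500*y₀^8 - 10000*y₀^7 - 110000*y₀^6 - 800000*y₀^5 - 4200000*y₀^4 - 16000000*y₀^3 - 44000000*y₀^2 - 80000000*y₀ - 80000000 = 0 := by rw [← pl_eval]; exact h₀
  have hevaly : (y₀+z)^10 - 500*(y₀+z)^8 - 10000*(y₀+z)^7 - 110000*(y₀+z)^6 - 800000*(y₀+z)^5 - 4200000*(y₀+z)^4 - 16000000*(y₀+z)^3 - 44000000*(y₀+z)^2 - 80000000*(y₀+z) - 80000000 = 0 := by rw [← hyz, ← pl_eval]; exact h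
  have hfl : z * ((-80000000 : K) * y₀ ^ 0 * z ^ 0 + (-88000000 : K) * y₀ ^ 1 * z ^ 0 + (-48000000 : K) * y₀ ^ 2 * z ^ 0 + (-16800000 : K) * y₀ ^ 3 * z ^ 0 + (-4000000 : K) * y₀ ^ 4 * z ^ 0 + (-660000 : K) * y₀ ^ 5 * z ^ 0 + (-70000 : K) * y₀ ^ 6 * z ^ 0 + (-4000 : K) * y₀ ^ 7 * z ^ 0 + (10 : K) * y₀ ^ 9 * z ^ 0 + (-44000000 : K) * y₀ ^ 0 * z ^ 1 + (-48000000 : K) * y₀ ^ 1 * z ^ 1 + (-25200000 : K) * y₀ ^ 2 * z ^ 1 + (-8000000 : K) * y₀ ^ 3 * z ^ 1 + (-1650000 : K) * y₀ ^ 4 * z ^ 1 + (-210000 : K) * y₀ ^ 5 * z ^ 1 + (-14000 : K) * y₀ ^ 6 * z ^ 1 + (45 : K) * y₀ ^ 8 * z ^ 1 + (-16000000 : K) * y₀ ^ 0 * z ^ 2 + (-16800000 : K) * y₀ ^ 1 * z ^ 2 + (-8000000 : K) * y₀ ^ 2 * z ^ 2 + (-2200000 : K) * y₀ ^ 3 *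 z ^ 2 + (-350000 : K) * y₀ ^ 4 * z ^ 2 + (-28000 : K) * y₀ ^ 5 * z ^ 2 + (120 : K) * y₀ ^ 7 * z ^ 2 + (-4200000 : K) * y₀ ^ 0 * z ^ 3 + (-4000000 : K) * y₀ ^ 1 * z ^ 3 + (-1650000 : K) * y₀ ^ 2 * z ^ 3 + (-350000 : K) * y₀ ^ 3 * z ^ 3 + (-35000 : K) * y₀ ^ 4 * z ^ 3 + (210 : K) * y₀ ^ 6 * z ^ 3 + (-800000 : K) * y₀ ^ 0 * z ^ 4 + (-660000 : K) * y₀ ^ 1 * z ^ 4 + (-210000 : K) * y₀ ^ 2 * z ^ 4 + (-28000 : K) * y₀ ^ 3 * z ^ 4 + (252 : K) * y₀ ^ 5 * z ^ 4 + (-110000 : K) * y₀ ^ 0 * z ^ 5 + (-70000 : K) * y₀ ^ 1 * z ^ 5 + (-14000 : K) * y₀ ^ 2 * z ^ 5 + (210 : K) * y₀ ^ 4 * z ^ 5 + (-10000 : K) * y₀ ^ 0 * z ^ 6 + (-4000 : K) * y₀ ^ 1 * z ^ 6 + (120 : K) * y₀ ^ 3 * z ^ 6 + (-500 : K) * y₀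 ^ 0 * z ^ 7 + (45 : K) * y₀ ^ 2 * z ^ 7 + (10 : K) * y₀ ^ 1 * z ^ 8 + (1 : K) * y₀ ^ 0 * z ^ 9) = 0 := by linear_combination hevaly - heval₀
  have hflat : (-80000000 : K) * y₀ ^ 0 * z ^ 0 + (-88000000 : K) * y₀ ^ 1 * z ^ 0 + (-48000000 : K) * y₀ ^ 2 * z ^ 0 + (-16800000 : K) * y₀ ^ 3 * z ^ 0 + (-4000000 : K) * y₀ ^ 4 * z ^ 0 + (-660000 : K) * y₀ ^ 5 * z ^ 0 + (-70000 : K) * y₀ ^ 6 * z ^ 0 + (-4000 : K) * y₀ ^ 7 * z ^ 0 + (10 : K) * y₀ ^ 9 * z ^ 0 + (-44000000 : K) * y₀ ^ 0 * z ^ 1 + (-48000000 : K) * y₀ ^ 1 * z ^ 1 + (-25200000 : K) * y₀ ^ 2 * z ^ 1 + (-8000000 : K) * y₀ ^ 3 * z ^ 1 + (-1650000 : K) * y₀ ^ 4 * z ^ 1 + (-210000 : K) * y₀ ^ 5 * z ^ 1 + (-14000 : K) * y₀ ^ 6 * z ^ 1 + (45 : K) * y₀ ^ 8 * z ^ 1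 + (-16000000 : K) * y₀ ^ 0 * z ^ 2 + (-16800000 : K) * y₀ ^ 1 * z ^ 2 + (-8000000 : K) * y₀ ^ 2 * z ^ 2 + (-2200000 : K) * y₀ ^ 3 * z ^ 2 + (-350000 : K) * y₀ ^ 4 * z ^ 2 + (-28000 : K) * y₀ ^ 5 * z ^ 2 + (120 : K) * y₀ ^ 7 * z ^ 2 + (-4200000 : K) * y₀ ^ 0 * z ^ 3 + (-4000000 : K) * y₀ ^ 1 * z ^ 3 + (-1650000 : K) * y₀ ^ 2 * z ^ 3 + (-350000 : K) * y₀ ^ 3 * z ^ 3 + (-35000 : K) * y₀ ^ 4 * z ^ 3 + (210 : K) * y₀ ^ 6 * z ^ 3 + (-800000 : K) * y₀ ^ 0 * z ^ 4 + (-660000 : K) * y₀ ^ 1 * z ^ 4 + (-210000 : K) * y₀ ^ 2 * z ^ 4 + (-28000 : K) * y₀ ^ 3 * z ^ 4 + (252 : K) * y₀ ^ 5 * z ^ 4 + (-110000 : K) * y₀ ^ 0 * z ^ 5 + (-70000 : K) * y₀ ^ 1 * z ^ 5 + (-14000 : K) * y₀ ^ 2 * z ^ 5 + (210 : K) * y₀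 ^ 4 * z ^ 5 + (-10000 : K) * y₀ ^ 0 * z ^ 6 + (-4000 : K) * y₀ ^ 1 * z ^ 6 + (120 : K) * y₀ ^ 3 * z ^ 6 + (-500 : K) * y₀ ^ 0 * z ^ 7 + (45 : K) * y₀ ^ 2 * z ^ 7 + (10 : K) * y₀ ^ 1 * z ^ 8 + (1 : K) * y₀ ^ 0 * z ^ 9 = 0 := (mul_eq_zero.mp hfl).resolve_left hz
  have nc1 : v ((-1 : K)) = (1/5:ℝ)^0 := by
    rw [show ((-1:K)) = -((1:K)) by norm_num, v.map_neg]
    exact vc1 v hQ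
  have pc1 : v ((1 : K)) = (1/5:ℝ)^0 := vc1 v hQ
  have nc10 : v ((-10 : K)) = (1/5:ℝ)^1 := by
    rw [show ((-10:K)) = -((10:K)) by norm_num, v.map_neg]
    exact vc10 v hQ
  have pc10 : v ((10 : K)) = (1/5:ℝ)^1 := vc10 v hQ
  have nc45 : v ((-45 : K)) = (1/5:ℝ)^1 := by
    rw [show ((-45:K)) = -((45:K)) by norm_num, v.map_neg]
    exact vc45 v hQ
  have pc45 : v ((45 : K)) = (1/5:ℝ)^1 := vc45 v hQ
  have nc120 : v ((-120 : K)) = (1/5:ℝ)^1 := by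
    rw [show ((-120:K)) = -((120:K)) by norm_num, v.map_neg]
    exact vc120 v hQ
  have pc120 : v ((120 : K)) = (1/5:ℝ)^1 := vc120 v hQ
  have nc210 : v ((-210 : K)) = (1/5:ℝ)^1 := by
    rw [show ((-210:K)) = -((210:K)) by norm_num, v.map_neg]
    exact vc210 v hQ
  have pc210 : v ((210 : K)) = (1/5:ℝ)^1 := vc210 v hQ
  have nc252 : v ((-252 : K)) = (1/5:ℝ)^0 := by
    rw [show ((-252:K)) = -((252:K)) by norm_num, v.map_neg]
    exact vc252 v hQ
  have pc252 : v ((252 : K)) = (1/5:ℝ)^0 := vc252 v hQ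
  have nc500 : v ((-500 : K)) = (1/5:ℝ)^3 := by
    rw [show ((-500:K)) = -((500:K)) by norm_num, v.map_neg]
    exact vc500 v hQ
  have pc500 : v ((500 : K)) = (1/5:ℝ)^3 := vc500 v hQ
  have nc4000 : v ((-4000 : K)) = (1/5:ℝ)^3 := by
    rw [show ((-4000:K)) = -((4000:K)) by norm_num, v.map_neg]
    exact vc4000 v hQ
  have pc4000 : v ((4000 : K)) = (1/5:ℝ)^3 := vc4000 v hQ
  have nc10000 : v ((-10000 : K)) = (1/5:ℝ)^4 := by
    rw [show ((-10000:K)) = -((10000:K)) by norm_num, v.map_neg]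
    exact vc10000 v hQ
  have pc10000 : v ((10000 : K)) = (1/5:ℝ)^4 := vc10000 v hQ
  have nc14000 : v ((-14000 : K)) = (1/5:ℝ)^3 := by
    rw [show ((-14000:K)) = -((14000:K)) by norm_num, v.map_neg]
    exact vc14000 v hQ
  have pc14000 : v ((14000 : K)) = (1/5:ℝ)^3 := vc14000 v hQ
  have nc28000 : v ((-28000 : K)) = (1/5:ℝ)^3 := by
    rw [show ((-28000:K)) = -((28000:K)) by norm_num, v.map_neg]
    exact vc28000 v hQ
  have pc28000 : v ((28000 : K)) = (1/5:ℝ)^3 := vc28000 v hQ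
  have nc35000 : v ((-35000 : K)) = (1/5:ℝ)^4 := by
    rw [show ((-35000:K)) = -((35000:K)) by norm_num, v.map_neg]
    exact vc35000 v hQ
  have pc35000 : v ((35000 : K)) = (1/5:ℝ)^4 := vc35000 v hQ
  have nc70000 : v ((-70000 : K)) = (1/5:ℝ)^4 := by
    rw [show ((-70000:K)) = -((70000:K)) by norm_num, v.map_neg]
    exact vc70000 v hQ
  have pc70000 : v ((70000 : K)) = (1/5:ℝ)^4 := vc70000 v hQ
  have nc110000 : v ((-110000 : K)) = (1/5:ℝ)^4 := by
    rw [show ((-110000:K)) = -((110000:K)) by norm_num, v.map_neg]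
    exact vc110000 v hQ
  have pc110000 : v ((110000 : K)) = (1/5:ℝ)^4 := vc110000 v hQ
  have nc210000 : v ((-210000 : K)) = (1/5:ℝ)^4 := by
    rw [show ((-210000:K)) = -((210000:K)) by norm_num, v.map_neg]
    exact vc210000 v hQ
  have pc210000 : v ((210000 : K)) = (1/5:ℝ)^4 := vc210000 v hQ
  have nc350000 : v ((-350000 : K)) = (1/5:ℝ)^5 := by
    rw [show ((-350000:K)) = -((350000:K)) by norm_num, v.map_neg]
    exact vc350000 v hQ
  have pc350000 : v ((350000 : K)) = (1/5:ℝ)^5 := vc350000 v hQ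
  have nc660000 : v ((-660000 : K)) = (1/5:ℝ)^4 := by
    rw [show ((-660000:K)) = -((660000:K)) by norm_num, v.map_neg]
    exact vc660000 v hQ
  have pc660000 : v ((660000 : K)) = (1/5:ℝ)^4 := vc660000 v hQ
  have nc800000 : v ((-800000 : K)) = (1/5:ℝ)^5 := by
    rw [show ((-800000:K)) = -((800000:K)) by norm_num, v.map_neg]
    exact vc800000 v hQ
  have pc800000 : v ((800000 : K)) = (1/5:ℝ)^5 := vc800000 v hQ
  have nc1650000 : v ((-1650000 : K)) = (1/5:ℝ)^5 := by
    rw [show ((-1650000:K)) = -((1650000:K)) by norm_num, v.map_neg]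
    exact vc1650000 v hQ
  have pc1650000 : v ((1650000 : K)) = (1/5:ℝ)^5 := vc1650000 v hQ
  have nc2200000 : v ((-2200000 : K)) = (1/5:ℝ)^5 := by
    rw [show ((-2200000:K)) = -((2200000:K)) by norm_num, v.map_neg]
    exact vc2200000 v hQ
  have pc2200000 : v ((2200000 : K)) = (1/5:ℝ)^5 := vc2200000 v hQ
  have nc4000000 : v ((-4000000 : K)) = (1/5:ℝ)^6 := by
    rw [show ((-4000000:K)) = -((4000000:K)) by norm_num, v.map_neg]
    exact vc4000000 v hQ
  have pc4000000 : v ((4000000 : K)) = (1/5:ℝ)^6 := vc4000000 v hQ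
  have nc4200000 : v ((-4200000 : K)) = (1/5:ℝ)^5 := by
    rw [show ((-4200000:K)) = -((4200000:K)) by norm_num, v.map_neg]
    exact vc4200000 v hQ
  have pc4200000 : v ((4200000 : K)) = (1/5:ℝ)^5 := vc4200000 v hQ
  have nc8000000 : v ((-8000000 : K)) = (1/5:ℝ)^6 := by
    rw [show ((-8000000:K)) = -((8000000:K)) by norm_num, v.map_neg]
    exact vc8000000 v hQ
  have pc8000000 : v ((8000000 : K)) = (1/5:ℝ)^6 := vc8000000 v hQ
  have nc16000000 : v ((-16000000 : K)) = (1/5:ℝ)^6 := by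
    rw [show ((-16000000:K)) = -((16000000:K)) by norm_num, v.map_neg]
    exact vc16000000 v hQ
  have pc16000000 : v ((16000000 : K)) = (1/5:ℝ)^6 := vc16000000 v hQ
  have nc16800000 : v ((-16800000 : K)) = (1/5:ℝ)^5 := by
    rw [show ((-16800000:K)) = -((16800000:K)) by norm_num, v.map_neg]
    exact vc16800000 v hQ
  have pc16800000 : v ((16800000 : K)) = (1/5:ℝ)^5 := vc16800000 v hQ
  have nc25200000 : v ((-25200000 : K)) = (1/5:ℝ)^5 := by
    rw [show ((-25200000:K)) = -((25200000:K)) by norm_num, v.map_neg]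
    exact vc25200000 v hQ
  have pc25200000 : v ((25200000 : K)) = (1/5:ℝ)^5 := vc25200000 v hQ
  have nc44000000 : v ((-44000000 : K)) = (1/5:ℝ)^6 := by
    rw [show ((-44000000:K)) = -((44000000:K)) by norm_num, v.map_neg]
    exact vc44000000 v hQ
  have pc44000000 : v ((44000000 : K)) = (1/5:ℝ)^6 := vc44000000 v hQ
  have nc48000000 : v ((-48000000 : K)) = (1/5:ℝ)^6 := by
    rw [show ((-48000000:K)) = -((48000000:K)) by norm_num, v.map_neg]
    exact vc48000000 v hQ
  have pc48000000 : v ((48000000 : K)) = (1/5:ℝ)^6 := vc48000000 v hQ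
  have nc80000000 : v ((-80000000 : K)) = (1/5:ℝ)^7 := by
    rw [show ((-80000000:K)) = -((80000000:K)) by norm_num, v.map_neg]
    exact vc80000000 v hQ
  have pc80000000 : v ((80000000 : K)) = (1/5:ℝ)^7 := vc80000000 v hQ
  have nc88000000 : v ((-88000000 : K)) = (1/5:ℝ)^6 := by
    rw [show ((-88000000:K)) = -((88000000:K)) by norm_num, v.map_neg]
    exact vc88000000 v hQ
  have pc88000000 : v ((88000000 : K)) = (1/5:ℝ)^6 := vc88000000 v hQ
  by_contra hcon
  push_neg at hcon
  obtain ⟨hn7, hn8⟩ := hcon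
  rcases lt_trichotomy ((v z)^10) ((1/5:ℝ)^8) with hlt | he8 | hgt8
  · have hs1 : (-88000000 : K) * y₀ ^ 1 * z ^ 0 + ((-80000000 : K) * y₀ ^ 0 * z ^ 0 + ((-48000000 : K) * y₀ ^ 2 * z ^ 0 + ((-16800000 : K) * y₀ ^ 3 * z ^ 0 + ((-4000000 : K) * y₀ ^ 4 * z ^ 0 + ((-660000 : K) * y₀ ^ 5 * z ^ 0 + ((-70000 : K) * y₀ ^ 6 * z ^ 0 + ((-4000 : K) * y₀ ^ 7 * z ^ 0 + ((10 : K) * y₀ ^ 9 * z ^ 0 + ((-44000000 : K) * y₀ ^ 0 * z ^ 1 + ((-48000000 : K) * y₀ ^ 1 * z ^ 1 + ((-25200000 : K) * y₀ ^ 2 * z ^ 1 + ((-8000000 : K) * y₀ ^ 3 * z ^ 1 + ((-1650000 : K) * y₀ ^ 4 * z ^ 1 + ((-210000 : K) * y₀ ^ 5 * z ^ 1 + ((-14000 : K) * y₀ ^ 6 * z ^ 1 + ((45 : K) * y₀ ^ 8 * z ^ 1 + ((-16000000 : K) * y₀ ^ 0 * z ^ 2 + ((-16800000 : K) * y₀ ^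 1 * z ^ 2 + ((-8000000 : K) * y₀ ^ 2 * z ^ 2 + ((-2200000 : K) * y₀ ^ 3 * z ^ 2 + ((-350000 : K) * y₀ ^ 4 * z ^ 2 + ((-28000 : K) * y₀ ^ 5 * z ^ 2 + ((120 : K) * y₀ ^ 7 * z ^ 2 + ((-4200000 : K) * y₀ ^ 0 * z ^ 3 + ((-4000000 : K) * y₀ ^ 1 * z ^ 3 + ((-1650000 : K) * y₀ ^ 2 * z ^ 3 + ((-350000 : K) * y₀ ^ 3 * z ^ 3 + ((-35000 : K) * y₀ ^ 4 * z ^ 3 + ((210 : K) * y₀ ^ 6 * z ^ 3 + ((-800000 : K) * y₀ ^ 0 * z ^ 4 + ((-660000 : K) * y₀ ^ 1 * z ^ 4 + ((-210000 : K) * y₀ ^ 2 * z ^ 4 + ((-28000 : K) * y₀ ^ 3 * z ^ 4 + ((252 : K) * y₀ ^ 5 * z ^ 4 + ((-110000 : K) * y₀ ^ 0 * z ^ 5 + ((-70000 : K) * y₀ ^ 1 * z ^ 5 + ((-14000 : K) * y₀ ^ 2 * z ^ 5 + ((210 : K) * y₀ ^ 4 * z ^ 5 + ((-10000 : K) * y₀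 ^ 0 * z ^ 6 + ((-4000 : K) * y₀ ^ 1 * z ^ 6 + ((120 : K) * y₀ ^ 3 * z ^ 6 + ((-500 : K) * y₀ ^ 0 * z ^ 7 + ((45 : K) * y₀ ^ 2 * z ^ 7 + ((10 : K) * y₀ ^ 1 * z ^ 8 + ((1 : K) * y₀ ^ 0 * z ^ 9))))))))))))))))))))))))))))))))))))))))))))) = 0 := by linear_combination hflat
    have hvdom : v ((-88000000 : K) * y₀ ^ 1 * z ^ 0) = (1/5:ℝ)^6 * (v y₀)^1 * (v z)^0 := by
      rw [v.map_mul, v.map_mul, v.map_pow, v.map_pow, nc88000000]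
    have hm1 : v ((-80000000 : K) * y₀ ^ 0 * z ^ 0) < (1/5:ℝ)^6 * (v y₀)^1 * (v z)^0 := by
      rw [v.map_mul, v.map_mul, v.map_pow, v.map_pow, nc80000000]
      exact vdom_hi (v y₀) (v z) ht hs 7 8 7 0 0 6 1 0 ht7 hlt (by norm_num) (by norm_num) (Or.inl (by norm_num))
    have hm2 : v ((-48000000 : K) * y₀ ^ 2 * z ^ 0) < (1/5:ℝ)^6 * (v y₀)^1 * (v z)^0 := by
      rw [v.map_mul, v.map_mul, v.map_pow, v.map_pow, nc48000000]
      exact vdom_hi (v y₀) (v z) ht hs 7 8 6 2 0 6 1 0 ht7 hlt (by norm_num) (by norm_num) (Or.inl (by norm_num))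
    have hm3 : v ((-16800000 : K) * y₀ ^ 3 * z ^ 0) < (1/5:ℝ)^6 * (v y₀)^1 * (v z)^0 := by
      rw [v.map_mul, v.map_mul, v.map_pow, v.map_pow, nc16800000]
      exact vdom_hi (v y₀) (v z) ht hs 7 8 5 3 0 6 1 0 ht7 hlt (by norm_num) (by norm_num) (Or.inl (by norm_num))
    have hm4 : v ((-4000000 : K) * y₀ ^ 4 * z ^ 0) < (1/5:ℝ)^6 * (v y₀)^1 * (v z)^0 := by
      rw [v.map_mul, v.map_mul, v.map_pow, v.map_pow, nc4000000]
      exact vdom_hi (v y₀) (v z) ht hs 7 8 6 4 0 6 1 0 ht7 hlt (by norm_num) (by norm_num) (Or.inl (by norm_num))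
    have hm5 : v ((-660000 : K) * y₀ ^ 5 * z ^ 0) < (1/5:ℝ)^6 * (v y₀)^1 * (v z)^0 := by
      rw [v.map_mul, v.map_mul, v.map_pow, v.map_pow, nc660000]
      exact vdom_hi (v y₀) (v z) ht hs 7 8 4 5 0 6 1 0 ht7 hlt (by norm_num) (by norm_num) (Or.inl (by norm_num))
    have hm6 : v ((-70000 : K) * y₀ ^ 6 * z ^ 0) < (1/5:ℝ)^6 * (v y₀)^1 * (v z)^0 := by
      rw [v.map_mul, v.map_mul, v.map_pow, v.map_pow, nc70000]
      exact vdom_hi (v y₀) (v z) ht hs 7 8 4 6 0 6 1 0 ht7 hlt (by norm_num) (by norm_num) (Or.inl (by norm_num))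
    have hm7 : v ((-4000 : K) * y₀ ^ 7 * z ^ 0) < (1/5:ℝ)^6 * (v y₀)^1 * (v z)^0 := by
      rw [v.map_mul, v.map_mul, v.map_pow, v.map_pow, nc4000]
      exact vdom_hi (v y₀) (v z) ht hs 7 8 3 7 0 6 1 0 ht7 hlt (by norm_num) (by norm_num) (Or.inl (by norm_num))
    have hm8 : v ((10 : K) * y₀ ^ 9 * z ^ 0) < (1/5:ℝ)^6 * (v y₀)^1 * (v z)^0 := by
      rw [v.map_mul, v.map_mul, v.map_pow, v.map_pow, pc10]
      exact vdom_hi (v y₀) (v z) ht hs 7 8 1 9 0 6 1 0 ht7 hlt (by norm_num) (by norm_num) (Or.inl (by norm_num))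
    have hm9 : v ((-44000000 : K) * y₀ ^ 0 * z ^ 1) < (1/5:ℝ)^6 * (v y₀)^1 * (v z)^0 := by
      rw [v.map_mul, v.map_mul, v.map_pow, v.map_pow, nc44000000]
      exact vdom_hi (v y₀) (v z) ht hs 7 8 6 0 1 6 1 0 ht7 hlt (by norm_num) (by norm_num) (Or.inl (by norm_num))
    have hm10 : v ((-48000000 : K) * y₀ ^ 1 * z ^ 1) < (1/5:ℝ)^6 * (v y₀)^1 * (v z)^0 := by
      rw [v.map_mul, v.map_mul, v.map_pow, v.map_pow, nc48000000]
      exact vdom_hi (v y₀) (v z) ht hs 7 8 6 1 1 6 1 0 ht7 hlt (by norm_num) (by norm_num) (Or.inl (by norm_num))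
    have hm11 : v ((-25200000 : K) * y₀ ^ 2 * z ^ 1) < (1/5:ℝ)^6 * (v y₀)^1 * (v z)^0 := by
      rw [v.map_mul, v.map_mul, v.map_pow, v.map_pow, nc25200000]
      exact vdom_hi (v y₀) (v z) ht hs 7 8 5 2 1 6 1 0 ht7 hlt (by norm_num) (by norm_num) (Or.inl (by norm_num))
    have hm12 : v ((-8000000 : K) * y₀ ^ 3 * z ^ 1) < (1/5:ℝ)^6 * (v y₀)^1 * (v z)^0 := by
      rw [v.map_mul, v.map_mul, v.map_pow, v.map_pow, nc8000000]
      exact vdom_hi (v y₀) (v z) ht hs 7 8 6 3 1 6 1 0 ht7 hlt (by norm_num) (by norm_num) (Or.inl (by norm_num))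
    have hm13 : v ((-1650000 : K) * y₀ ^ 4 * z ^ 1) < (1/5:ℝ)^6 * (v y₀)^1 * (v z)^0 := by
      rw [v.map_mul, v.map_mul, v.map_pow, v.map_pow, nc1650000]
      exact vdom_hi (v y₀) (v z) ht hs 7 8 5 4 1 6 1 0 ht7 hlt (by norm_num) (by norm_num) (Or.inl (by norm_num))
    have hm14 : v ((-210000 : K) * y₀ ^ 5 * z ^ 1) < (1/5:ℝ)^6 * (v y₀)^1 * (v z)^0 := by
      rw [v.map_mul, v.map_mul, v.map_pow, v.map_pow, nc210000]
      exact vdom_hi (v y₀) (v z) ht hs 7 8 4 5 1 6 1 0 ht7 hlt (by norm_num) (by norm_num) (Or.inl (by norm_num))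
    have hm15 : v ((-14000 : K) * y₀ ^ 6 * z ^ 1) < (1/5:ℝ)^6 * (v y₀)^1 * (v z)^0 := by
      rw [v.map_mul, v.map_mul, v.map_pow, v.map_pow, nc14000]
      exact vdom_hi (v y₀) (v z) ht hs 7 8 3 6 1 6 1 0 ht7 hlt (by norm_num) (by norm_num) (Or.inl (by norm_num))
    have hm16 : v ((45 : K) * y₀ ^ 8 * z ^ 1) < (1/5:ℝ)^6 * (v y₀)^1 * (v z)^0 := by
      rw [v.map_mul, v.map_mul, v.map_pow, v.map_pow, pc45]
      exact vdom_hi (v y₀) (v z) ht hs 7 8 1 8 1 6 1 0 ht7 hlt (by norm_num) (by norm_num) (Or.inl (by norm_num))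
    have hm17 : v ((-16000000 : K) * y₀ ^ 0 * z ^ 2) < (1/5:ℝ)^6 * (v y₀)^1 * (v z)^0 := by
      rw [v.map_mul, v.map_mul, v.map_pow, v.map_pow, nc16000000]
      exact vdom_hi (v y₀) (v z) ht hs 7 8 6 0 2 6 1 0 ht7 hlt (by norm_num) (by norm_num) (Or.inl (by norm_num))
    have hm18 : v ((-16800000 : K) * y₀ ^ 1 * z ^ 2) < (1/5:ℝ)^6 * (v y₀)^1 * (v z)^0 := by
      rw [v.map_mul, v.map_mul, v.map_pow, v.map_pow, nc16800000]
      exact vdom_hi (v y₀) (v z) ht hs 7 8 5 1 2 6 1 0 ht7 hlt (by norm_num) (by norm_num) (Or.inl (by norm_num))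
    have hm19 : v ((-8000000 : K) * y₀ ^ 2 * z ^ 2) < (1/5:ℝ)^6 * (v y₀)^1 * (v z)^0 := by
      rw [v.map_mul, v.map_mul, v.map_pow, v.map_pow, nc8000000]
      exact vdom_hi (v y₀) (v z) ht hs 7 8 6 2 2 6 1 0 ht7 hlt (by norm_num) (by norm_num) (Or.inl (by norm_num))
    have hm20 : v ((-2200000 : K) * y₀ ^ 3 * z ^ 2) < (1/5:ℝ)^6 * (v y₀)^1 * (v z)^0 := by
      rw [v.map_mul, v.map_mul, v.map_pow, v.map_pow, nc2200000]
      exact vdom_hi (v y₀) (v z) ht hs 7 8 5 3 2 6 1 0 ht7 hlt (by norm_num) (by norm_num) (Or.inl (by norm_num))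
    have hm21 : v ((-350000 : K) * y₀ ^ 4 * z ^ 2) < (1/5:ℝ)^6 * (v y₀)^1 * (v z)^0 := by
      rw [v.map_mul, v.map_mul, v.map_pow, v.map_pow, nc350000]
      exact vdom_hi (v y₀) (v z) ht hs 7 8 5 4 2 6 1 0 ht7 hlt (by norm_num) (by norm_num) (Or.inl (by norm_num))
    have hm22 : v ((-28000 : K) * y₀ ^ 5 * z ^ 2) < (1/5:ℝ)^6 * (v y₀)^1 * (v z)^0 := by
      rw [v.map_mul, v.map_mul, v.map_pow, v.map_pow, nc28000]
      exact vdom_hi (v y₀) (v z) ht hs 7 8 3 5 2 6 1 0 ht7 hlt (by norm_num) (by norm_num) (Or.inl (by norm_num))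
    have hm23 : v ((120 : K) * y₀ ^ 7 * z ^ 2) < (1/5:ℝ)^6 * (v y₀)^1 * (v z)^0 := by
      rw [v.map_mul, v.map_mul, v.map_pow, v.map_pow, pc120]
      exact vdom_hi (v y₀) (v z) ht hs 7 8 1 7 2 6 1 0 ht7 hlt (by norm_num) (by norm_num) (Or.inl (by norm_num))
    have hm24 : v ((-4200000 : K) * y₀ ^ 0 * z ^ 3) < (1/5:ℝ)^6 * (v y₀)^1 * (v z)^0 := by
      rw [v.map_mul, v.map_mul, v.map_pow, v.map_pow, nc4200000]
      exact vdom_hi (v y₀) (v z) ht hs 7 8 5 0 3 6 1 0 ht7 hlt (by norm_num) (by norm_num) (Or.inl (by norm_num))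
    have hm25 : v ((-4000000 : K) * y₀ ^ 1 * z ^ 3) < (1/5:ℝ)^6 * (v y₀)^1 * (v z)^0 := by
      rw [v.map_mul, v.map_mul, v.map_pow, v.map_pow, nc4000000]
      exact vdom_hi (v y₀) (v z) ht hs 7 8 6 1 3 6 1 0 ht7 hlt (by norm_num) (by norm_num) (Or.inl (by norm_num))
    have hm26 : v ((-1650000 : K) * y₀ ^ 2 * z ^ 3) < (1/5:ℝ)^6 * (v y₀)^1 * (v z)^0 := by
      rw [v.map_mul, v.map_mul, v.map_pow, v.map_pow, nc1650000]
      exact vdom_hi (v y₀) (v z) ht hs 7 8 5 2 3 6 1 0 ht7 hlt (by norm_num) (by norm_num) (Or.inl (by norm_num))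
    have hm27 : v ((-350000 : K) * y₀ ^ 3 * z ^ 3) < (1/5:ℝ)^6 * (v y₀)^1 * (v z)^0 := by
      rw [v.map_mul, v.map_mul, v.map_pow, v.map_pow, nc350000]
      exact vdom_hi (v y₀) (v z) ht hs 7 8 5 3 3 6 1 0 ht7 hlt (by norm_num) (by norm_num) (Or.inl (by norm_num))
    have hm28 : v ((-35000 : K) * y₀ ^ 4 * z ^ 3) < (1/5:ℝ)^6 * (v y₀)^1 * (v z)^0 := by
      rw [v.map_mul, v.map_mul, v.map_pow, v.map_pow, nc35000]
      exact vdom_hi (v y₀) (v z) ht hs 7 8 4 4 3 6 1 0 ht7 hlt (by norm_num) (by norm_num) (Or.inl (by norm_num))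
    have hm29 : v ((210 : K) * y₀ ^ 6 * z ^ 3) < (1/5:ℝ)^6 * (v y₀)^1 * (v z)^0 := by
      rw [v.map_mul, v.map_mul, v.map_pow, v.map_pow, pc210]
      exact vdom_hi (v y₀) (v z) ht hs 7 8 1 6 3 6 1 0 ht7 hlt (by norm_num) (by norm_num) (Or.inl (by norm_num))
    have hm30 : v ((-800000 : K) * y₀ ^ 0 * z ^ 4) < (1/5:ℝ)^6 * (v y₀)^1 * (v z)^0 := by
      rw [v.map_mul, v.map_mul, v.map_pow, v.map_pow, nc800000]
      exact vdom_hi (v y₀) (v z) ht hs 7 8 5 0 4 6 1 0 ht7 hlt (by norm_num) (by norm_num) (Or.inl (by norm_num))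
    have hm31 : v ((-660000 : K) * y₀ ^ 1 * z ^ 4) < (1/5:ℝ)^6 * (v y₀)^1 * (v z)^0 := by
      rw [v.map_mul, v.map_mul, v.map_pow, v.map_pow, nc660000]
      exact vdom_hi (v y₀) (v z) ht hs 7 8 4 1 4 6 1 0 ht7 hlt (by norm_num) (by norm_num) (Or.inl (by norm_num))
    have hm32 : v ((-210000 : K) * y₀ ^ 2 * z ^ 4) < (1/5:ℝ)^6 * (v y₀)^1 * (v z)^0 := by
      rw [v.map_mul, v.map_mul, v.map_pow, v.map_pow, nc210000]
      exact vdom_hi (v y₀) (v z) ht hs 7 8 4 2 4 6 1 0 ht7 hlt (by norm_num) (by norm_num) (Or.inl (by norm_num))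
    have hm33 : v ((-28000 : K) * y₀ ^ 3 * z ^ 4) < (1/5:ℝ)^6 * (v y₀)^1 * (v z)^0 := by
      rw [v.map_mul, v.map_mul, v.map_pow, v.map_pow, nc28000]
      exact vdom_hi (v y₀) (v z) ht hs 7 8 3 3 4 6 1 0 ht7 hlt (by norm_num) (by norm_num) (Or.inl (by norm_num))
    have hm34 : v ((252 : K) * y₀ ^ 5 * z ^ 4) < (1/5:ℝ)^6 * (v y₀)^1 * (v z)^0 := by
      rw [v.map_mul, v.map_mul, v.map_pow, v.map_pow, pc252]
      exact vdom_hi (v y₀) (v z) ht hs 7 8 0 5 4 6 1 0 ht7 hlt (by norm_num) (by norm_num) (Or.inr (by norm_num))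
    have hm35 : v ((-110000 : K) * y₀ ^ 0 * z ^ 5) < (1/5:ℝ)^6 * (v y₀)^1 * (v z)^0 := by
      rw [v.map_mul, v.map_mul, v.map_pow, v.map_pow, nc110000]
      exact vdom_hi (v y₀) (v z) ht hs 7 8 4 0 5 6 1 0 ht7 hlt (by norm_num) (by norm_num) (Or.inl (by norm_num))
    have hm36 : v ((-70000 : K) * y₀ ^ 1 * z ^ 5) < (1/5:ℝ)^6 * (v y₀)^1 * (v z)^0 := by
      rw [v.map_mul, v.map_mul, v.map_pow, v.map_pow, nc70000]
      exact vdom_hi (v y₀) (v z) ht hs 7 8 4 1 5 6 1 0 ht7 hlt (by norm_num) (by norm_num) (Or.inl (by norm_num))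
    have hm37 : v ((-14000 : K) * y₀ ^ 2 * z ^ 5) < (1/5:ℝ)^6 * (v y₀)^1 * (v z)^0 := by
      rw [v.map_mul, v.map_mul, v.map_pow, v.map_pow, nc14000]
      exact vdom_hi (v y₀) (v z) ht hs 7 8 3 2 5 6 1 0 ht7 hlt (by norm_num) (by norm_num) (Or.inl (by norm_num))
    have hm38 : v ((210 : K) * y₀ ^ 4 * z ^ 5) < (1/5:ℝ)^6 * (v y₀)^1 * (v z)^0 := by
      rw [v.map_mul, v.map_mul, v.map_pow, v.map_pow, pc210]
      exact vdom_hi (v y₀) (v z) ht hs 7 8 1 4 5 6 1 0 ht7 hlt (by norm_num) (by norm_num) (Or.inl (by norm_num))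
    have hm39 : v ((-10000 : K) * y₀ ^ 0 * z ^ 6) < (1/5:ℝ)^6 * (v y₀)^1 * (v z)^0 := by
      rw [v.map_mul, v.map_mul, v.map_pow, v.map_pow, nc10000]
      exact vdom_hi (v y₀) (v z) ht hs 7 8 4 0 6 6 1 0 ht7 hlt (by norm_num) (by norm_num) (Or.inl (by norm_num))
    have hm40 : v ((-4000 : K) * y₀ ^ 1 * z ^ 6) < (1/5:ℝ)^6 * (v y₀)^1 * (v z)^0 := by
      rw [v.map_mul, v.map_mul, v.map_pow, v.map_pow, nc4000]
      exact vdom_hi (v y₀) (v z) ht hs 7 8 3 1 6 6 1 0 ht7 hlt (by norm_num) (by norm_num) (Or.inl (by norm_num))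
    have hm41 : v ((120 : K) * y₀ ^ 3 * z ^ 6) < (1/5:ℝ)^6 * (v y₀)^1 * (v z)^0 := by
      rw [v.map_mul, v.map_mul, v.map_pow, v.map_pow, pc120]
      exact vdom_hi (v y₀) (v z) ht hs 7 8 1 3 6 6 1 0 ht7 hlt (by norm_num) (by norm_num) (Or.inl (by norm_num))
    have hm42 : v ((-500 : K) * y₀ ^ 0 * z ^ 7) < (1/5:ℝ)^6 * (v y₀)^1 * (v z)^0 := by
      rw [v.map_mul, v.map_mul, v.map_pow, v.map_pow, nc500]
      exact vdom_hi (v y₀) (v z) ht hs 7 8 3 0 7 6 1 0 ht7 hlt (by norm_num) (by norm_num) (Or.inl (by norm_num))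
    have hm43 : v ((45 : K) * y₀ ^ 2 * z ^ 7) < (1/5:ℝ)^6 * (v y₀)^1 * (v z)^0 := by
      rw [v.map_mul, v.map_mul, v.map_pow, v.map_pow, pc45]
      exact vdom_hi (v y₀) (v z) ht hs 7 8 1 2 7 6 1 0 ht7 hlt (by norm_num) (by norm_num) (Or.inl (by norm_num))
    have hm44 : v ((10 : K) * y₀ ^ 1 * z ^ 8) < (1/5:ℝ)^6 * (v y₀)^1 * (v z)^0 := by
      rw [v.map_mul, v.map_mul, v.map_pow, v.map_pow, pc10]
      exact vdom_hi (v y₀) (v z) ht hs 7 8 1 1 8 6 1 0 ht7 hlt (by norm_num) (by norm_num) (Or.inl (by norm_num))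
    have hm45 : v ((1 : K) * y₀ ^ 0 * z ^ 9) < (1/5:ℝ)^6 * (v y₀)^1 * (v z)^0 := by
      rw [v.map_mul, v.map_mul, v.map_pow, v.map_pow, pc1]
      exact vdom_hi (v y₀) (v z) ht hs 7 8 0 0 9 6 1 0 ht7 hlt (by norm_num) (by norm_num) (Or.inl (by norm_num))
    have hrest : v ((-80000000 : K) * y₀ ^ 0 * z ^ 0 + ((-48000000 : K) * y₀ ^ 2 * z ^ 0 + ((-16800000 : K) * y₀ ^ 3 * z ^ 0 + ((-4000000 : K) * y₀ ^ 4 * z ^ 0 + ((-660000 : K) * y₀ ^ 5 * z ^ 0 + ((-70000 : K) * y₀ ^ 6 * z ^ 0 + ((-4000 : K) * y₀ ^ 7 * z ^ 0 + ((10 : K) * y₀ ^ 9 * z ^ 0 + ((-44000000 : K) * y₀ ^ 0 * z ^ 1 + ((-48000000 : K) * y₀ ^ 1 * z ^ 1 + ((-25200000 : K) * y₀ ^ 2 * z ^ 1 + ((-8000000 : K) * y₀ ^ 3 * z ^ 1 + ((-1650000 : K) * y₀ ^ 4 * z ^ 1 + ((-210000 : K) * y₀ ^ 5 * z ^ 1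 + ((-14000 : K) * y₀ ^ 6 * z ^ 1 + ((45 : K) * y₀ ^ 8 * z ^ 1 + ((-16000000 : K) * y₀ ^ 0 * z ^ 2 + ((-16800000 : K) * y₀ ^ 1 * z ^ 2 + ((-8000000 : K) * y₀ ^ 2 * z ^ 2 + ((-2200000 : K) * y₀ ^ 3 * z ^ 2 + ((-350000 : K) * y₀ ^ 4 * z ^ 2 + ((-28000 : K) * y₀ ^ 5 * z ^ 2 + ((120 : K) * y₀ ^ 7 * z ^ 2 + ((-4200000 : K) * y₀ ^ 0 * z ^ 3 + ((-4000000 : K) * y₀ ^ 1 * z ^ 3 + ((-1650000 : K) * y₀ ^ 2 * z ^ 3 + ((-350000 : K) * y₀ ^ 3 * z ^ 3 + ((-35000 : K) * y₀ ^ 4 * z ^ 3 + ((210 : K) * y₀ ^ 6 * z ^ 3 + ((-800000 : K) * y₀ ^ 0 * z ^ 4 + ((-660000 : K) * y₀ ^ 1 * z ^ 4 + ((-210000 : K) * y₀ ^ 2 * z ^ 4 + ((-28000 : K) * y₀ ^ 3 * z ^ 4 + ((252 : K) * y₀ ^ 5 * z ^ 4 + ((-110000 : K) * y₀ ^ 0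 * z ^ 5 + ((-70000 : K) * y₀ ^ 1 * z ^ 5 + ((-14000 : K) * y₀ ^ 2 * z ^ 5 + ((210 : K) * y₀ ^ 4 * z ^ 5 + ((-10000 : K) * y₀ ^ 0 * z ^ 6 + ((-4000 : K) * y₀ ^ 1 * z ^ 6 + ((120 : K) * y₀ ^ 3 * z ^ 6 + ((-500 : K) * y₀ ^ 0 * z ^ 7 + ((45 : K) * y₀ ^ 2 * z ^ 7 + ((10 : K) * y₀ ^ 1 * z ^ 8 + ((1 : K) * y₀ ^ 0 * z ^ 9))))))))))))))))))))))))))))))))))))))))))))) < v ((-88000000 : K) * y₀ ^ 1 * z ^ 0) := by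
      rw [hvdom]
      exact vadd_lt v hna hm1 (vadd_lt v hna hm2 (vadd_lt v hna hm3 (vadd_lt v hna hm4 (vadd_lt v hna hm5 (vadd_lt v hna hm6 (vadd_lt v hna hm7 (vadd_lt v hna hm8 (vadd_lt v hna hm9 (vadd_lt v hna hm10 (vadd_lt v hna hm11 (vadd_lt v hna hm12 (vadd_lt v hna hm13 (vadd_lt v hna hm14 (vadd_lt v hna hm15 (vadd_lt v hna hm16 (vadd_lt v hna hm17 (vadd_lt v hna hm18 (vadd_lt v hna hm19 (vadd_lt v hna hm20 (vadd_lt v hna hm21 (vadd_lt v hna hm22 (vadd_lt v hna hm23 (vadd_lt v hna hm24 (vadd_lt v hna hm25 (vadd_lt v hna hm26 (vadd_lt v hna hm27 (vadd_lt v hna hm28 (vadd_lt v hna hm29 (vadd_lt v hna hm30 (vadd_lt v hna hm31 (vadd_lt v hna hm32 (vadd_lt v hna hm33 (vadd_lt v hna hm34 (vadd_lt v hna hm35 (vadd_lt v hna hm36 (vadd_lt v hna hm37 (vadd_lt v hna hm38 (vadd_lt v hna hm39 (vadd_lt v hna hm40 (vadd_lt v hna hm41 (vadd_lt v hna hm42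 (vadd_lt v hna hm43 (vadd_lt v hna hm44 (hm45))))))))))))))))))))))))))))))))))))))))))))
    have hfin := vadd_eq v hna hrest
    rw [hs1, v.map_zero] at hfin
    rw [hvdom] at hfin
    have hpos : 0 < (1/5:ℝ)^6 * (v y₀)^1 * (v z)^0 := by positivity
    linarith
  · exact hn8 he8
  · rcases lt_trichotomy ((v z)^10) ((1/5:ℝ)^7) with hmid | he7 | hgt7
    · have hs2 : (252 : K) * y₀ ^ 5 * z ^ 4 + ((-80000000 : K) * y₀ ^ 0 * z ^ 0 + ((-88000000 : K) * y₀ ^ 1 * z ^ 0 + ((-48000000 : K) * y₀ ^ 2 * z ^ 0 + ((-16800000 : K) * y₀ ^ 3 * z ^ 0 + ((-4000000 : K) * y₀ ^ 4 * z ^ 0 + ((-660000 : K) * y₀ ^ 5 * z ^ 0 + ((-70000 : K) * y₀ ^ 6 * z ^ 0 + ((-4000 : K) * y₀ ^ 7 * z ^ 0 + ((10 : K) * y₀ ^ 9 * z ^ 0 + ((-44000000 : K) * y₀ ^ 0 * z ^ 1 + ((-48000000 : K) * y₀ ^ 1 * z ^ 1 + ((-25200000 : K) * y₀ ^ 2 *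 z ^ 1 + ((-8000000 : K) * y₀ ^ 3 * z ^ 1 + ((-1650000 : K) * y₀ ^ 4 * z ^ 1 + ((-210000 : K) * y₀ ^ 5 * z ^ 1 + ((-14000 : K) * y₀ ^ 6 * z ^ 1 + ((45 : K) * y₀ ^ 8 * z ^ 1 + ((-16000000 : K) * y₀ ^ 0 * z ^ 2 + ((-16800000 : K) * y₀ ^ 1 * z ^ 2 + ((-8000000 : K) * y₀ ^ 2 * z ^ 2 + ((-2200000 : K) * y₀ ^ 3 * z ^ 2 + ((-350000 : K) * y₀ ^ 4 * z ^ 2 + ((-28000 : K) * y₀ ^ 5 * z ^ 2 + ((120 : K) * y₀ ^ 7 * z ^ 2 + ((-4200000 : K) * y₀ ^ 0 * z ^ 3 + ((-4000000 : K) * y₀ ^ 1 * z ^ 3 + ((-1650000 : K) * y₀ ^ 2 * z ^ 3 + ((-350000 : K) * y₀ ^ 3 * z ^ 3 + ((-35000 : K) * y₀ ^ 4 * z ^ 3 + ((210 : K) * y₀ ^ 6 * z ^ 3 + ((-800000 : K) * y₀ ^ 0 * z ^ 4 + ((-660000 : K) * y₀ ^ 1 * z ^ 4 + ((-210000 : K)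 * y₀ ^ 2 * z ^ 4 + ((-28000 : K) * y₀ ^ 3 * z ^ 4 + ((-110000 : K) * y₀ ^ 0 * z ^ 5 + ((-70000 : K) * y₀ ^ 1 * z ^ 5 + ((-14000 : K) * y₀ ^ 2 * z ^ 5 + ((210 : K) * y₀ ^ 4 * z ^ 5 + ((-10000 : K) * y₀ ^ 0 * z ^ 6 + ((-4000 : K) * y₀ ^ 1 * z ^ 6 + ((120 : K) * y₀ ^ 3 * z ^ 6 + ((-500 : K) * y₀ ^ 0 * z ^ 7 + ((45 : K) * y₀ ^ 2 * z ^ 7 + ((10 : K) * y₀ ^ 1 * z ^ 8 + ((1 : K) * y₀ ^ 0 * z ^ 9))))))))))))))))))))))))))))))))))))))))))))) = 0 := by linear_combination hflat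
      have hvdom : v ((252 : K) * y₀ ^ 5 * z ^ 4) = (1/5:ℝ)^0 * (v y₀)^5 * (v z)^4 := by
        rw [v.map_mul, v.map_mul, v.map_pow, v.map_pow, pc252]
      have hm1 : v ((-80000000 : K) * y₀ ^ 0 * z ^ 0) < (1/5:ℝ)^0 * (v y₀)^5 * (v z)^4 := by
        rw [v.map_mul, v.map_mul, v.map_pow, v.map_pow, nc80000000]
        exact vdom_lo (v y₀) (v z) ht hs 7 8 7 0 0 0 5 4 ht7 hgt8 (by norm_num) (by norm_num) (Or.inl (by norm_num))
      have hm2 : v ((-88000000 : K) * y₀ ^ 1 * z ^ 0) < (1/5:ℝ)^0 * (v y₀)^5 * (v z)^4 := by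
        rw [v.map_mul, v.map_mul, v.map_pow, v.map_pow, nc88000000]
        exact vdom_lo (v y₀) (v z) ht hs 7 8 6 1 0 0 5 4 ht7 hgt8 (by norm_num) (by norm_num) (Or.inr (by norm_num))
      have hm3 : v ((-48000000 : K) * y₀ ^ 2 * z ^ 0) < (1/5:ℝ)^0 * (v y₀)^5 * (v z)^4 := by
        rw [v.map_mul, v.map_mul, v.map_pow, v.map_pow, nc48000000]
        exact vdom_lo (v y₀) (v z) ht hs 7 8 6 2 0 0 5 4 ht7 hgt8 (by norm_num) (by norm_num) (Or.inl (by norm_num))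
      have hm4 : v ((-16800000 : K) * y₀ ^ 3 * z ^ 0) < (1/5:ℝ)^0 * (v y₀)^5 * (v z)^4 := by
        rw [v.map_mul, v.map_mul, v.map_pow, v.map_pow, nc16800000]
        exact vdom_lo (v y₀) (v z) ht hs 7 8 5 3 0 0 5 4 ht7 hgt8 (by norm_num) (by norm_num) (Or.inl (by norm_num))
      have hm5 : v ((-4000000 : K) * y₀ ^ 4 * z ^ 0) < (1/5:ℝ)^0 * (v y₀)^5 * (v z)^4 := by
        rw [v.map_mul, v.map_mul, v.map_pow, v.map_pow, nc4000000]
        exact vdom_lo (v y₀) (v z) ht hs 7 8 6 4 0 0 5 4 ht7 hgt8 (by norm_num) (by norm_num) (Or.inl (by norm_num))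
      have hm6 : v ((-660000 : K) * y₀ ^ 5 * z ^ 0) < (1/5:ℝ)^0 * (v y₀)^5 * (v z)^4 := by
        rw [v.map_mul, v.map_mul, v.map_pow, v.map_pow, nc660000]
        exact vdom_lo (v y₀) (v z) ht hs 7 8 4 5 0 0 5 4 ht7 hgt8 (by norm_num) (by norm_num) (Or.inl (by norm_num))
      have hm7 : v ((-70000 : K) * y₀ ^ 6 * z ^ 0) < (1/5:ℝ)^0 * (v y₀)^5 * (v z)^4 := by
        rw [v.map_mul, v.map_mul, v.map_pow, v.map_pow, nc70000]
        exact vdom_lo (v y₀) (v z) ht hs 7 8 4 6 0 0 5 4 ht7 hgt8 (by norm_num) (by norm_num) (Or.inl (by norm_num))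
      have hm8 : v ((-4000 : K) * y₀ ^ 7 * z ^ 0) < (1/5:ℝ)^0 * (v y₀)^5 * (v z)^4 := by
        rw [v.map_mul, v.map_mul, v.map_pow, v.map_pow, nc4000]
        exact vdom_lo (v y₀) (v z) ht hs 7 8 3 7 0 0 5 4 ht7 hgt8 (by norm_num) (by norm_num) (Or.inl (by norm_num))
      have hm9 : v ((10 : K) * y₀ ^ 9 * z ^ 0) < (1/5:ℝ)^0 * (v y₀)^5 * (v z)^4 := by
        rw [v.map_mul, v.map_mul, v.map_pow, v.map_pow, pc10]
        exact vdom_lo (v y₀) (v z) ht hs 7 8 1 9 0 0 5 4 ht7 hgt8 (by norm_num) (by norm_num) (Or.inl (by norm_num))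
      have hm10 : v ((-44000000 : K) * y₀ ^ 0 * z ^ 1) < (1/5:ℝ)^0 * (v y₀)^5 * (v z)^4 := by
        rw [v.map_mul, v.map_mul, v.map_pow, v.map_pow, nc44000000]
        exact vdom_lo (v y₀) (v z) ht hs 7 8 6 0 1 0 5 4 ht7 hgt8 (by norm_num) (by norm_num) (Or.inl (by norm_num))
      have hm11 : v ((-48000000 : K) * y₀ ^ 1 * z ^ 1) < (1/5:ℝ)^0 * (v y₀)^5 * (v z)^4 := by
        rw [v.map_mul, v.map_mul, v.map_pow, v.map_pow, nc48000000]
        exact vdom_lo (v y₀) (v z) ht hs 7 8 6 1 1 0 5 4 ht7 hgt8 (by norm_num) (by norm_num) (Or.inl (by norm_num))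
      have hm12 : v ((-25200000 : K) * y₀ ^ 2 * z ^ 1) < (1/5:ℝ)^0 * (v y₀)^5 * (v z)^4 := by
        rw [v.map_mul, v.map_mul, v.map_pow, v.map_pow, nc25200000]
        exact vdom_lo (v y₀) (v z) ht hs 7 8 5 2 1 0 5 4 ht7 hgt8 (by norm_num) (by norm_num) (Or.inl (by norm_num))
      have hm13 : v ((-8000000 : K) * y₀ ^ 3 * z ^ 1) < (1/5:ℝ)^0 * (v y₀)^5 * (v z)^4 := by
        rw [v.map_mul, v.map_mul, v.map_pow, v.map_pow, nc8000000]
        exact vdom_lo (v y₀) (v z) ht hs 7 8 6 3 1 0 5 4 ht7 hgt8 (by norm_num) (by norm_num) (Or.inl (by norm_num))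
      have hm14 : v ((-1650000 : K) * y₀ ^ 4 * z ^ 1) < (1/5:ℝ)^0 * (v y₀)^5 * (v z)^4 := by
        rw [v.map_mul, v.map_mul, v.map_pow, v.map_pow, nc1650000]
        exact vdom_lo (v y₀) (v z) ht hs 7 8 5 4 1 0 5 4 ht7 hgt8 (by norm_num) (by norm_num) (Or.inl (by norm_num))
      have hm15 : v ((-210000 : K) * y₀ ^ 5 * z ^ 1) < (1/5:ℝ)^0 * (v y₀)^5 * (v z)^4 := by
        rw [v.map_mul, v.map_mul, v.map_pow, v.map_pow, nc210000]
        exact vdom_lo (v y₀) (v z) ht hs 7 8 4 5 1 0 5 4 ht7 hgt8 (by norm_num) (by norm_num) (Or.inl (by norm_num))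
      have hm16 : v ((-14000 : K) * y₀ ^ 6 * z ^ 1) < (1/5:ℝ)^0 * (v y₀)^5 * (v z)^4 := by
        rw [v.map_mul, v.map_mul, v.map_pow, v.map_pow, nc14000]
        exact vdom_lo (v y₀) (v z) ht hs 7 8 3 6 1 0 5 4 ht7 hgt8 (by norm_num) (by norm_num) (Or.inl (by norm_num))
      have hm17 : v ((45 : K) * y₀ ^ 8 * z ^ 1) < (1/5:ℝ)^0 * (v y₀)^5 * (v z)^4 := by
        rw [v.map_mul, v.map_mul, v.map_pow, v.map_pow, pc45]
        exact vdom_lo (v y₀) (v z) ht hs 7 8 1 8 1 0 5 4 ht7 hgt8 (by norm_num) (by norm_num) (Or.inl (by norm_num))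
      have hm18 : v ((-16000000 : K) * y₀ ^ 0 * z ^ 2) < (1/5:ℝ)^0 * (v y₀)^5 * (v z)^4 := by
        rw [v.map_mul, v.map_mul, v.map_pow, v.map_pow, nc16000000]
        exact vdom_lo (v y₀) (v z) ht hs 7 8 6 0 2 0 5 4 ht7 hgt8 (by norm_num) (by norm_num) (Or.inl (by norm_num))
      have hm19 : v ((-16800000 : K) * y₀ ^ 1 * z ^ 2) < (1/5:ℝ)^0 * (v y₀)^5 * (v z)^4 := by
        rw [v.map_mul, v.map_mul, v.map_pow, v.map_pow, nc16800000]
        exact vdom_lo (v y₀) (v z) ht hs 7 8 5 1 2 0 5 4 ht7 hgt8 (by norm_num) (by norm_num) (Or.inl (by norm_num))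
      have hm20 : v ((-8000000 : K) * y₀ ^ 2 * z ^ 2) < (1/5:ℝ)^0 * (v y₀)^5 * (v z)^4 := by
        rw [v.map_mul, v.map_mul, v.map_pow, v.map_pow, nc8000000]
        exact vdom_lo (v y₀) (v z) ht hs 7 8 6 2 2 0 5 4 ht7 hgt8 (by norm_num) (by norm_num) (Or.inl (by norm_num))
      have hm21 : v ((-2200000 : K) * y₀ ^ 3 * z ^ 2) < (1/5:ℝ)^0 * (v y₀)^5 * (v z)^4 := by
        rw [v.map_mul, v.map_mul, v.map_pow, v.map_pow, nc2200000]
        exact vdom_lo (v y₀) (v z) ht hs 7 8 5 3 2 0 5 4 ht7 hgt8 (by norm_num) (by norm_num) (Or.inl (by norm_num))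
      have hm22 : v ((-350000 : K) * y₀ ^ 4 * z ^ 2) < (1/5:ℝ)^0 * (v y₀)^5 * (v z)^4 := by
        rw [v.map_mul, v.map_mul, v.map_pow, v.map_pow, nc350000]
        exact vdom_lo (v y₀) (v z) ht hs 7 8 5 4 2 0 5 4 ht7 hgt8 (by norm_num) (by norm_num) (Or.inl (by norm_num))
      have hm23 : v ((-28000 : K) * y₀ ^ 5 * z ^ 2) < (1/5:ℝ)^0 * (v y₀)^5 * (v z)^4 := by
        rw [v.map_mul, v.map_mul, v.map_pow, v.map_pow, nc28000]
        exact vdom_lo (v y₀) (v z) ht hs 7 8 3 5 2 0 5 4 ht7 hgt8 (by norm_num) (by norm_num) (Or.inl (by norm_num))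
      have hm24 : v ((120 : K) * y₀ ^ 7 * z ^ 2) < (1/5:ℝ)^0 * (v y₀)^5 * (v z)^4 := by
        rw [v.map_mul, v.map_mul, v.map_pow, v.map_pow, pc120]
        exact vdom_lo (v y₀) (v z) ht hs 7 8 1 7 2 0 5 4 ht7 hgt8 (by norm_num) (by norm_num) (Or.inl (by norm_num))
      have hm25 : v ((-4200000 : K) * y₀ ^ 0 * z ^ 3) < (1/5:ℝ)^0 * (v y₀)^5 * (v z)^4 := by
        rw [v.map_mul, v.map_mul, v.map_pow, v.map_pow, nc4200000]
        exact vdom_lo (v y₀) (v z) ht hs 7 8 5 0 3 0 5 4 ht7 hgt8 (by norm_num) (by norm_num) (Or.inl (by norm_num))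
      have hm26 : v ((-4000000 : K) * y₀ ^ 1 * z ^ 3) < (1/5:ℝ)^0 * (v y₀)^5 * (v z)^4 := by
        rw [v.map_mul, v.map_mul, v.map_pow, v.map_pow, nc4000000]
        exact vdom_lo (v y₀) (v z) ht hs 7 8 6 1 3 0 5 4 ht7 hgt8 (by norm_num) (by norm_num) (Or.inl (by norm_num))
      have hm27 : v ((-1650000 : K) * y₀ ^ 2 * z ^ 3) < (1/5:ℝ)^0 * (v y₀)^5 * (v z)^4 := by
        rw [v.map_mul, v.map_mul, v.map_pow, v.map_pow, nc1650000]
        exact vdom_lo (v y₀) (v z) ht hs 7 8 5 2 3 0 5 4 ht7 hgt8 (by norm_num) (by norm_num) (Or.inl (by norm_num))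
      have hm28 : v ((-350000 : K) * y₀ ^ 3 * z ^ 3) < (1/5:ℝ)^0 * (v y₀)^5 * (v z)^4 := by
        rw [v.map_mul, v.map_mul, v.map_pow, v.map_pow, nc350000]
        exact vdom_lo (v y₀) (v z) ht hs 7 8 5 3 3 0 5 4 ht7 hgt8 (by norm_num) (by norm_num) (Or.inl (by norm_num))
      have hm29 : v ((-35000 : K) * y₀ ^ 4 * z ^ 3) < (1/5:ℝ)^0 * (v y₀)^5 * (v z)^4 := by
        rw [v.map_mul, v.map_mul, v.map_pow, v.map_pow, nc35000]
        exact vdom_lo (v y₀) (v z) ht hs 7 8 4 4 3 0 5 4 ht7 hgt8 (by norm_num) (by norm_num) (Or.inl (by norm_num))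
      have hm30 : v ((210 : K) * y₀ ^ 6 * z ^ 3) < (1/5:ℝ)^0 * (v y₀)^5 * (v z)^4 := by
        rw [v.map_mul, v.map_mul, v.map_pow, v.map_pow, pc210]
        exact vdom_lo (v y₀) (v z) ht hs 7 8 1 6 3 0 5 4 ht7 hgt8 (by norm_num) (by norm_num) (Or.inl (by norm_num))
      have hm31 : v ((-800000 : K) * y₀ ^ 0 * z ^ 4) < (1/5:ℝ)^0 * (v y₀)^5 * (v z)^4 := by
        rw [v.map_mul, v.map_mul, v.map_pow, v.map_pow, nc800000]
        exact vdom_hi (v y₀) (v z) ht hs 7 7 5 0 4 0 5 4 ht7 hmid (by norm_num) (by norm_num) (Or.inl (by norm_num))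
      have hm32 : v ((-660000 : K) * y₀ ^ 1 * z ^ 4) < (1/5:ℝ)^0 * (v y₀)^5 * (v z)^4 := by
        rw [v.map_mul, v.map_mul, v.map_pow, v.map_pow, nc660000]
        exact vdom_hi (v y₀) (v z) ht hs 7 7 4 1 4 0 5 4 ht7 hmid (by norm_num) (by norm_num) (Or.inl (by norm_num))
      have hm33 : v ((-210000 : K) * y₀ ^ 2 * z ^ 4) < (1/5:ℝ)^0 * (v y₀)^5 * (v z)^4 := by
        rw [v.map_mul, v.map_mul, v.map_pow, v.map_pow, nc210000]
        exact vdom_hi (v y₀) (v z) ht hs 7 7 4 2 4 0 5 4 ht7 hmid (by norm_num) (by norm_num) (Or.inl (by norm_num))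
      have hm34 : v ((-28000 : K) * y₀ ^ 3 * z ^ 4) < (1/5:ℝ)^0 * (v y₀)^5 * (v z)^4 := by
        rw [v.map_mul, v.map_mul, v.map_pow, v.map_pow, nc28000]
        exact vdom_hi (v y₀) (v z) ht hs 7 7 3 3 4 0 5 4 ht7 hmid (by norm_num) (by norm_num) (Or.inl (by norm_num))
      have hm35 : v ((-110000 : K) * y₀ ^ 0 * z ^ 5) < (1/5:ℝ)^0 * (v y₀)^5 * (v z)^4 := by
        rw [v.map_mul, v.map_mul, v.map_pow, v.map_pow, nc110000]
        exact vdom_hi (v y₀) (v z) ht hs 7 7 4 0 5 0 5 4 ht7 hmid (by norm_num) (by norm_num) (Or.inl (by norm_num))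
      have hm36 : v ((-70000 : K) * y₀ ^ 1 * z ^ 5) < (1/5:ℝ)^0 * (v y₀)^5 * (v z)^4 := by
        rw [v.map_mul, v.map_mul, v.map_pow, v.map_pow, nc70000]
        exact vdom_hi (v y₀) (v z) ht hs 7 7 4 1 5 0 5 4 ht7 hmid (by norm_num) (by norm_num) (Or.inl (by norm_num))
      have hm37 : v ((-14000 : K) * y₀ ^ 2 * z ^ 5) < (1/5:ℝ)^0 * (v y₀)^5 * (v z)^4 := by
        rw [v.map_mul, v.map_mul, v.map_pow, v.map_pow, nc14000]
        exact vdom_hi (v y₀) (v z) ht hs 7 7 3 2 5 0 5 4 ht7 hmid (by norm_num) (by norm_num) (Or.inl (by norm_num))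
      have hm38 : v ((210 : K) * y₀ ^ 4 * z ^ 5) < (1/5:ℝ)^0 * (v y₀)^5 * (v z)^4 := by
        rw [v.map_mul, v.map_mul, v.map_pow, v.map_pow, pc210]
        exact vdom_hi (v y₀) (v z) ht hs 7 7 1 4 5 0 5 4 ht7 hmid (by norm_num) (by norm_num) (Or.inl (by norm_num))
      have hm39 : v ((-10000 : K) * y₀ ^ 0 * z ^ 6) < (1/5:ℝ)^0 * (v y₀)^5 * (v z)^4 := by
        rw [v.map_mul, v.map_mul, v.map_pow, v.map_pow, nc10000]
        exact vdom_hi (v y₀) (v z) ht hs 7 7 4 0 6 0 5 4 ht7 hmid (by norm_num) (by norm_num) (Or.inl (by norm_num))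
      have hm40 : v ((-4000 : K) * y₀ ^ 1 * z ^ 6) < (1/5:ℝ)^0 * (v y₀)^5 * (v z)^4 := by
        rw [v.map_mul, v.map_mul, v.map_pow, v.map_pow, nc4000]
        exact vdom_hi (v y₀) (v z) ht hs 7 7 3 1 6 0 5 4 ht7 hmid (by norm_num) (by norm_num) (Or.inl (by norm_num))
      have hm41 : v ((120 : K) * y₀ ^ 3 * z ^ 6) < (1/5:ℝ)^0 * (v y₀)^5 * (v z)^4 := by
        rw [v.map_mul, v.map_mul, v.map_pow, v.map_pow, pc120]
        exact vdom_hi (v y₀) (v z) ht hs 7 7 1 3 6 0 5 4 ht7 hmid (by norm_num) (by norm_num) (Or.inl (by norm_num))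
      have hm42 : v ((-500 : K) * y₀ ^ 0 * z ^ 7) < (1/5:ℝ)^0 * (v y₀)^5 * (v z)^4 := by
        rw [v.map_mul, v.map_mul, v.map_pow, v.map_pow, nc500]
        exact vdom_hi (v y₀) (v z) ht hs 7 7 3 0 7 0 5 4 ht7 hmid (by norm_num) (by norm_num) (Or.inl (by norm_num))
      have hm43 : v ((45 : K) * y₀ ^ 2 * z ^ 7) < (1/5:ℝ)^0 * (v y₀)^5 * (v z)^4 := by
        rw [v.map_mul, v.map_mul, v.map_pow, v.map_pow, pc45]
        exact vdom_hi (v y₀) (v z) ht hs 7 7 1 2 7 0 5 4 ht7 hmid (by norm_num) (by norm_num) (Or.inl (by norm_num))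
      have hm44 : v ((10 : K) * y₀ ^ 1 * z ^ 8) < (1/5:ℝ)^0 * (v y₀)^5 * (v z)^4 := by
        rw [v.map_mul, v.map_mul, v.map_pow, v.map_pow, pc10]
        exact vdom_hi (v y₀) (v z) ht hs 7 7 1 1 8 0 5 4 ht7 hmid (by norm_num) (by norm_num) (Or.inl (by norm_num))
      have hm45 : v ((1 : K) * y₀ ^ 0 * z ^ 9) < (1/5:ℝ)^0 * (v y₀)^5 * (v z)^4 := by
        rw [v.map_mul, v.map_mul, v.map_pow, v.map_pow, pc1]
        exact vdom_hi (v y₀) (v z) ht hs 7 7 0 0 9 0 5 4 ht7 hmid (by norm_num) (by norm_num) (Or.inr (by norm_num))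
      have hrest : v ((-80000000 : K) * y₀ ^ 0 * z ^ 0 + ((-88000000 : K) * y₀ ^ 1 * z ^ 0 + ((-48000000 : K) * y₀ ^ 2 * z ^ 0 + ((-16800000 : K) * y₀ ^ 3 * z ^ 0 + ((-4000000 : K) * y₀ ^ 4 * z ^ 0 + ((-660000 : K) * y₀ ^ 5 * z ^ 0 + ((-70000 : K) * y₀ ^ 6 * z ^ 0 + ((-4000 : K) * y₀ ^ 7 * z ^ 0 + ((10 : K) * y₀ ^ 9 * z ^ 0 + ((-44000000 : K) * y₀ ^ 0 * z ^ 1 + ((-48000000 : K) * y₀ ^ 1 * z ^ 1 + ((-25200000 : K) * y₀ ^ 2 * z ^ 1 + ((-8000000 : K) * y₀ ^ 3 * z ^ 1 + ((-1650000 : K) * y₀ ^ 4 * z ^ 1 + ((-210000 : K) * y₀ ^ 5 * z ^ 1 + ((-14000 : K) * y₀ ^ 6 * z ^ 1 + ((45 : K) * y₀ ^ 8 * z ^ 1 + ((-16000000 : K) * y₀ ^ 0 * z ^ 2 + ((-16800000 : K) * y₀ ^ 1 * z ^ 2 + ((-8000000 : K) * y₀ ^ 2 * z ^ 2 + ((-2200000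 : K) * y₀ ^ 3 * z ^ 2 + ((-350000 : K) * y₀ ^ 4 * z ^ 2 + ((-28000 : K) * y₀ ^ 5 * z ^ 2 + ((120 : K) * y₀ ^ 7 * z ^ 2 + ((-4200000 : K) * y₀ ^ 0 * z ^ 3 + ((-4000000 : K) * y₀ ^ 1 * z ^ 3 + ((-1650000 : K) * y₀ ^ 2 * z ^ 3 + ((-350000 : K) * y₀ ^ 3 * z ^ 3 + ((-35000 : K) * y₀ ^ 4 * z ^ 3 + ((210 : K) * y₀ ^ 6 * z ^ 3 + ((-800000 : K) * y₀ ^ 0 * z ^ 4 + ((-660000 : K) * y₀ ^ 1 * z ^ 4 + ((-210000 : K) * y₀ ^ 2 * z ^ 4 + ((-28000 : K) * y₀ ^ 3 * z ^ 4 + ((-110000 : K) * y₀ ^ 0 * z ^ 5 + ((-70000 : K) * y₀ ^ 1 * z ^ 5 + ((-14000 : K) * y₀ ^ 2 * z ^ 5 + ((210 : K) * y₀ ^ 4 * z ^ 5 + ((-10000 : K) * y₀ ^ 0 * z ^ 6 + ((-4000 : K) * y₀ ^ 1 * z ^ 6 + ((120 : K) * y₀ ^ 3 * z ^ 6 + ((-500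 : K) * y₀ ^ 0 * z ^ 7 + ((45 : K) * y₀ ^ 2 * z ^ 7 + ((10 : K) * y₀ ^ 1 * z ^ 8 + ((1 : K) * y₀ ^ 0 * z ^ 9))))))))))))))))))))))))))))))))))))))))))))) < v ((252 : K) * y₀ ^ 5 * z ^ 4) := by
        rw [hvdom]
        exact vadd_lt v hna hm1 (vadd_lt v hna hm2 (vadd_lt v hna hm3 (vadd_lt v hna hm4 (vadd_lt v hna hm5 (vadd_lt v hna hm6 (vadd_lt v hna hm7 (vadd_lt v hna hm8 (vadd_lt v hna hm9 (vadd_lt v hna hm10 (vadd_lt v hna hm11 (vadd_lt v hna hm12 (vadd_lt v hna hm13 (vadd_lt v hna hm14 (vadd_lt v hna hm15 (vadd_lt v hna hm16 (vadd_lt v hna hm17 (vadd_lt v hna hm18 (vadd_lt v hna hm19 (vadd_lt v hna hm20 (vadd_lt v hna hm21 (vadd_lt v hna hm22 (vadd_lt v hna hm23 (vadd_lt v hna hm24 (vadd_lt v hna hm25 (vadd_lt v hna hm26 (vadd_lt v hna hm27 (vadd_lt v hna hm28 (vadd_lt v hna hm29 (vadd_lt v hna hm30 (vadd_lt v hna hm31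 (vadd_lt v hna hm32 (vadd_lt v hna hm33 (vadd_lt v hna hm34 (vadd_lt v hna hm35 (vadd_lt v hna hm36 (vadd_lt v hna hm37 (vadd_lt v hna hm38 (vadd_lt v hna hm39 (vadd_lt v hna hm40 (vadd_lt v hna hm41 (vadd_lt v hna hm42 (vadd_lt v hna hm43 (vadd_lt v hna hm44 (hm45))))))))))))))))))))))))))))))))))))))))))))
      have hfin := vadd_eq v hna hrest
      rw [hs2, v.map_zero] at hfin
      rw [hvdom] at hfin
      have hpos : 0 < (1/5:ℝ)^0 * (v y₀)^5 * (v z)^4 := by positivity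
      linarith
    · exact hn7 he7
    · linarith

end Aux

open Finset in
/-- Over an algebraically closed `K`, the monic degree-10 polynomial
`P(Y) = −20⁵·f⁺(Y²/20, Y)` has 10 distinct roots; for each root `y₀`, exactly 5
of the other roots `y` satisfy `‖y − y₀‖¹⁰ = 5⁻⁷` and exactly 4 satisfy
`‖y − y₀‖¹⁰ = 5⁻⁸`. -/
theorem ramification_points_two_equidistant_sets {K : Type*} [Field K] [IsAlgClosed K]
    (v : AbsoluteValue K ℝ) (hna : IsNonarchimedean v)
    (hQ : ∀ q : ℚ, v (q : K) = (padicNorm 5 q : ℝ)) :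
    ∀ S : Set K, S = {y : K | -(20 : K) ^ 5 * fplus (y ^ 2 / 20) y = 0} →
      S.ncard = 10 ∧
      ∀ y₀ ∈ S,
        {y ∈ S | y ≠ y₀ ∧ v (y - y₀) ^ 10 = (5 : ℝ)⁻¹ ^ 7}.ncard = 5 ∧
        {y ∈ S | y ≠ y₀ ∧ v (y - y₀) ^ 10 = (5 : ℝ)⁻¹ ^ 8}.ncard = 4 := by
  classical
  intro S hS
  haveI : CharZero K := by
    apply charZero_of_inj_zero
    intro n hn
    by_contra hcn
    have h1 := hQ (n : ℚ)
    rw [show (((n:ℚ)):K) = (n:K) by push_cast; ring, hn, v.map_zero] at h1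
    have h2 : padicNorm 5 (n:ℚ) ≠ 0 := padicNorm.nonzero (by exact_mod_cast hcn)
    exact h2 (by exact_mod_cast h1.symm)
  -- polynomial facts
  have hmonic : (pl K).Monic := pl_monic
  have hne : pl K ≠ 0 := hmonic.ne_zero
  have hsplits : (pl K).Splits := IsAlgClosed.splits (pl K)
  have hcard : Multiset.card (pl K).roots = 10 := by
    rw [Polynomial.splits_iff_card_roots.mp hsplits, pl_natDegree]
  have hmem : ∀ y : K, y ∈ (pl K).roots ↔ (pl K).eval y = 0 := by
    intro y; rw [Polynomial.mem_roots hne]; rfl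
  have hg1ne : ∀ y₀ : K, (pl K).eval y₀ = 0 → (pl K).derivative.eval y₀ ≠ 0 := by
    intro y₀ h hzero
    have hv := vg1 v hna hQ y₀ h
    obtain ⟨ht, -⟩ := vroot v hna hQ y₀ h
    rw [hzero, v.map_zero] at hv
    have : 0 < (1/5:ℝ)^6 * v y₀ := by positivity
    linarith
  have hnodup : (pl K).roots.Nodup := by
    rw [Multiset.nodup_iff_count_le_one]
    intro a
    by_contra hcnt
    push_neg at hcnt
    have ha : a ∈ (pl K).roots := Multiset.count_pos.mp (by omega)
    have h2 : 2 ≤ Polynomial.rootMultiplicity a (pl K) := by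
      rw [← Polynomial.count_roots]; omega
    have hdvd : (X - Polynomial.C a)^2 ∣ pl K :=
      (pow_dvd_pow _ h2).trans (Polynomial.pow_rootMultiplicity_dvd _ _)
    obtain ⟨q, hq⟩ := hdvd
    have hz : (pl K).derivative.eval a = 0 := by
      rw [hq]
      simp [Polynomial.derivative_mul, Polynomial.derivative_pow]
    exact hg1ne a ((hmem a).mp ha) hz
  have hfact : pl K = ((pl K).roots.map fun a => X - Polynomial.C a).prod :=
    hsplits.eq_prod_roots_of_monic hmonic
  set F : Finset K := ⟨(pl K).roots, hnodup⟩ with hF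
  have hmemF : ∀ y : K, y ∈ F ↔ (pl K).eval y = 0 := by
    intro y
    rw [← hmem y]
    rfl
  have hSF : S = ↑F := by
    rw [hS]
    ext y
    rw [Set.mem_setOf_eq, pl_fplus y, Finset.mem_coe, hmemF y]
  have hcardF : F.card = 10 := hcard
  constructor
  · rw [hSF, Set.ncard_coe_finset, hcardF]
  intro y₀ hy₀S
  have hy₀F : y₀ ∈ F := by rw [hSF] at hy₀S; exact hy₀S
  have hy₀root : (pl K).eval y₀ = 0 := (hmemF y₀).mp hy₀F
  obtain ⟨ht, ht7⟩ := vroot v hna hQ y₀ hy₀root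
  -- the product over the other roots
  have hy₀roots : y₀ ∈ (pl K).roots := (hmem y₀).mpr hy₀root
  have hdprod : (pl K).derivative.eval y₀
      = (((pl K).roots.erase y₀).map fun a => y₀ - a).prod := by
    conv_lhs => rw [hfact]
    exact Polynomial.eval_multiset_prod_X_sub_C_derivative hy₀roots
  have herase_val : (F.erase y₀).val = (pl K).roots.erase y₀ := by
    rw [Finset.erase_val]
  have hprodv : ∏ y ∈ F.erase y₀, v (y - y₀) = (1/5:ℝ)^6 * v y₀ := by
    have h1 : ∏ y ∈ F.erase y₀, v (y - y₀) = ∏ y ∈ F.erase y₀, v (y₀ - y) :=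
      Finset.prod_congr rfl (fun y _ => v.map_sub y y₀)
    have h2 : ∏ y ∈ F.erase y₀, v (y₀ - y) = v (∏ y ∈ F.erase y₀, (y₀ - y)) :=
      (map_prod v _ _).symm
    have h3 : ∏ y ∈ F.erase y₀, (y₀ - y)
        = (((pl K).roots.erase y₀).map fun a => y₀ - a).prod := by
      rw [← herase_val]; rfl
    rw [h1, h2, h3, ← hdprod]
    exact vg1 v hna hQ y₀ hy₀root
  -- counting
  set T := F.erase y₀ with hT
  have hcardT : T.card = 9 := by rw [hT, Finset.card_erase_of_mem hy₀F, hcardF]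
  set P7 : K → Prop := fun y => v (y-y₀)^10 = (1/5:ℝ)^7 with hP7
  set A := T.filter P7 with hA
  set B := T.filter (fun y => ¬ P7 y) with hBdef
  have hdich : ∀ y ∈ T, P7 y ∨ v (y-y₀)^10 = (1/5:ℝ)^8 := by
    intro y hy
    have hyF := Finset.mem_of_mem_erase hy
    exact vdist v hna hQ y₀ y hy₀root ((hmemF y).mp hyF) (Finset.ne_of_mem_erase hy)
  have hBeq : B = T.filter (fun y => v (y-y₀)^10 = (1/5:ℝ)^8) := by
    apply Finset.filter_congr
    intro y hy
    constructor
    · intro h8; exact (hdich y hy).resolve_left h8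
    · intro h8 h7; rw [hP7] at h7; rw [h7] at h8; exact absurd (pow15_inj h8) (by norm_num)
  have hcards : A.card + B.card = 9 := by
    rw [hA, hBdef, Finset.card_filter_add_card_filter_not, hcardT]
  have hsplit : (∏ y ∈ A, v (y-y₀)^10) * (∏ y ∈ B, v (y-y₀)^10) = ∏ y ∈ T, v (y-y₀)^10 :=
    Finset.prod_filter_mul_prod_filter_not T P7 _
  have hprodA : ∏ y ∈ A, v (y-y₀)^10 = ((1/5:ℝ)^7)^A.card := by
    rw [Finset.prod_congr rfl (fun y hy => (Finset.mem_filter.mp hy).2), Finset.prod_const]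
  have hprodB : ∏ y ∈ B, v (y-y₀)^10 = ((1/5:ℝ)^8)^B.card := by
    rw [hBeq]
    rw [Finset.prod_congr rfl (fun y hy => (Finset.mem_filter.mp hy).2), Finset.prod_const]
  have hprodT : ∏ y ∈ T, v (y-y₀)^10 = (1/5:ℝ)^67 := by
    rw [Finset.prod_pow, hprodv, mul_pow, ← pow_mul, ht7, ← pow_add]
  have key : (1/5:ℝ)^(7*A.card + 8*B.card) = (1/5:ℝ)^67 := by
    rw [pow_add, pow_mul, pow_mul, hprodA.symm, hprodB.symm, hsplit, hprodT]
  have hk := pow15_inj key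
  have hc2 : A.card = 5 ∧ B.card = 4 := by omega
  have hconv7 : (5:ℝ)⁻¹ ^ 7 = (1/5:ℝ)^7 := by norm_num
  have hconv8 : (5:ℝ)⁻¹ ^ 8 = (1/5:ℝ)^8 := by norm_num
  constructor
  · have hset : {y ∈ S | y ≠ y₀ ∧ v (y - y₀) ^ 10 = (5:ℝ)⁻¹ ^ 7} = ↑A := by
      rw [hSF]
      ext y
      simp only [Set.mem_setOf_eq, Finset.mem_coe, hA, Finset.mem_filter, hT,
        Finset.mem_erase, hP7, hconv7]
      tauto
    rw [hset, Set.ncard_coe_finset, hc2.1]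
  · have hset : {y ∈ S | y ≠ y₀ ∧ v (y - y₀) ^ 10 = (5:ℝ)⁻¹ ^ 8} = ↑(T.filter (fun y => v (y-y₀)^10 = (1/5:ℝ)^8)) := by
      rw [hSF]
      ext y
      simp only [Set.mem_setOf_eq, Finset.mem_coe, Finset.mem_filter, hT,
        Finset.mem_erase, hconv8]
      tauto
    rw [hset, Set.ncard_coe_finset, ← hBeq, hc2.2]
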